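/- There is an absolute constant c > 0 such that the following holds. Let d+ > d− > 0 satisfy d+ − d− ≥ c√(d+ ln d+) with d+ bounded below by a sufficiently large absolute constant, let G be a locally finite graph with σ : V(G) → {±1}, let C be the core, and let v be a vertex such that G_v is a finite tree. (1) If u ∈ C_v \ {v} with h_{u→v} ≥ 1 and μ*_{u→v} = 0, then cut(G_{u→v}, σ^{+1}_{u→v}) = cut(G_{u→v}, σ^{−1}_{u→v}). (2) If μ*_v = 0, then cut(G_v, σ^{+1}_v) = cut(G_v, σ^{−1}_v). -/

import Mathlib

open Filter Topology

attribute [local instance] Classical.propDecidable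

set_option linter.unusedVariables false

noncomputable section


/-! ### Basic functions -/

/-- The clamping function `ψ` restricted to the integers. -/
def psiZ (x : ℤ) : ℤ := max (-1) (min 1 x)

/-- The threshold function `ψ̃` restricted to the integers. -/
def tpsiZ (x : ℤ) : ℤ := if x ≤ -1 then -1 else 1

/-- `p : ℤ → ℝ` represents a probability measure on `{-1, 0, 1}`. -/
def IsProbOn3 (p : ℤ → ℝ) : Prop :=
  (∀ z, 0 ≤ p z) ∧ (∀ z : ℤ, z ∉ ({-1, 0, 1} : Set ℤ) → p z = 0) ∧ p (-1) + p 0 + p 1 = 1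

/-- `p` is skewed: `p(1) ≥ 1 - d₊⁻¹⁰`. -/
def Skewed (dp : ℝ) (p : ℤ → ℝ) : Prop := 1 - (dp ^ 10)⁻¹ ≤ p 1

/-- The point mass at `1`, i.e. `(0,0,1)`. -/
def delta1 : ℤ → ℝ := fun z => if z = 1 then 1 else 0

/-! ### The operator `T` -/

/-- Convolution of two mass functions on `ℤ`. -/
def convZ (a b : ℤ → ℝ) : ℤ → ℝ := fun z => ∑' w : ℤ, a w * b (z - w)

/-- `n`-fold convolution power (distribution of a sum of `n` i.i.d. copies). -/
def convPow (a : ℤ → ℝ) : ℕ → ℤ → ℝ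
  | 0 => fun z => if z = 0 then 1 else 0
  | n + 1 => convZ (convPow a n) a

/-- Poisson mass function with mean `d`. -/
def poisP (d : ℝ) (k : ℕ) : ℝ := Real.exp (-d) * d ^ k / (Nat.factorial k)

/-- Distribution of `-η` when `η` has distribution `a`. -/
def flipM (a : ℤ → ℝ) : ℤ → ℝ := fun z => a (-z)

/-- The distribution of `Z_p = ∑_{i=1}^{γ₊} η_i - ∑_{i=γ₊+1}^{γ₊+γ₋} η_i` where the `η_i`
are i.i.d. with distribution `p` and `γ₊ ~ Po(d₊)`, `γ₋ ~ Po(d₋)` are independent. -/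
def Zdist (dp dm : ℝ) (p : ℤ → ℝ) : ℤ → ℝ := fun z =>
  ∑' k : ℕ, ∑' l : ℕ, poisP dp k * poisP dm l * convZ (convPow p k) (convPow (flipM p) l) z

/-- The operator `𝒯 = 𝒯_{d₊,d₋}`: the distribution of `ψ(Z_p)`. -/
def Twp (dp dm : ℝ) (p : ℤ → ℝ) : ℤ → ℝ := fun z =>
  if z = 1 then ∑' m : ℕ, Zdist dp dm p (1 + (m : ℤ))
  else if z = 0 then Zdist dp dm p 0
  else if z = -1 then ∑' m : ℕ, Zdist dp dm p (-1 - (m : ℤ))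
  else 0

/-- The value `Z` as a function of the outcomes `η : Fin (k+l) → ℤ`, where the first `k`
coordinates form the `γ₊`-group and the remaining `l` the `γ₋`-group. -/
def zsum (k l : ℕ) (η : Fin (k + l) → ℤ) : ℤ :=
  (∑ j ∈ Finset.univ.filter (fun j : Fin (k + l) => (j : ℕ) < k), η j)
    - ∑ j ∈ Finset.univ.filter (fun j : Fin (k + l) => k ≤ (j : ℕ)), η j

/-- Conditional expectation of
`∑_{i=1}^{γ₊} 1{η_i = -ψ̃(Z)} + ∑_{i=γ₊+1}^{γ₊+γ₋} 1{η_i = ψ̃(Z)}` given `γ₊ = k, γ₋ = l`. -/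
def innerPhi (p : ℤ → ℝ) (k l : ℕ) : ℝ :=
  ∑ η ∈ Fintype.piFinset (fun _ : Fin (k + l) => ({-1, 0, 1} : Finset ℤ)),
    (∏ i, p (η i)) *
      (((Finset.univ.filter (fun i : Fin (k + l) =>
            (i : ℕ) < k ∧ η i = - tpsiZ (zsum k l η))).card : ℝ)
        + ((Finset.univ.filter (fun i : Fin (k + l) =>
            k ≤ (i : ℕ) ∧ η i = tpsiZ (zsum k l η))).card : ℝ))

/-- The functional `φ_{d₊,d₋}`. -/
def phiOp (dp dm : ℝ) (p : ℤ → ℝ) : ℝ :=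
  (1 / 2) * ∑' k : ℕ, ∑' l : ℕ, poisP dp k * poisP dm l * innerPhi p k l

/-! ### The L¹-Wasserstein distance on measures on `{-1,0,1}` -/

/-- `ℓ₁(p,q)`: infimum of `E |X - Y|` over couplings of `p` and `q`. -/
def ell1 (p q : ℤ → ℝ) : ℝ :=
  sInf { r | ∃ ν : ℤ × ℤ → ℝ, (∀ x y, 0 ≤ ν (x, y)) ∧
    (∀ x, ∑ y ∈ ({-1, 0, 1} : Finset ℤ), ν (x, y) = p x) ∧
    (∀ y, ∑ x ∈ ({-1, 0, 1} : Finset ℤ), ν (x, y) = q y) ∧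
    r = ∑ x ∈ ({-1, 0, 1} : Finset ℤ), ∑ y ∈ ({-1, 0, 1} : Finset ℤ),
          |(x : ℝ) - (y : ℝ)| * ν (x, y) }





/-! ### Graphs: restriction, cuts, the core, Warning Propagation -/

/-- Every neighbourhood in a graph on a finite vertex type is finite. -/
noncomputable instance fintypeNeighborSet {V : Type*} [Fintype V] (G : SimpleGraph V) (v : V) :
    Fintype (G.neighborSet v) := Fintype.ofFinite _

/-- The subgraph of `G` consisting of the edges inside `S` (the induced subgraph on `S`,
viewed as a graph on the ambient vertex set; vertices outside `S` are isolated). -/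
def restrictG {V : Type*} (G : SimpleGraph V) (S : Set V) : SimpleGraph V where
  Adj x y := G.Adj x y ∧ x ∈ S ∧ y ∈ S
  symm := ⟨fun x y h => ⟨G.adj_symm h.1, h.2.2, h.2.1⟩⟩
  loopless := ⟨fun x h => G.irrefl h.1⟩

/-- `cut(G, σ)` for the boundary condition `σ` on `U`: the least number of edges of `G` joining
vertices of different colours, over all `±1`-colourings `τ` agreeing with `σ` on `U`.
(The set of ordered pairs of adjacent bichromatic vertices has twice the size of the
corresponding edge set.) -/
def cutW {V : Type*} (G : SimpleGraph V) (U : Set V) (σ : V → ℤ) : ℕ :=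
  sInf { k | ∃ τ : V → ℤ, (∀ x, τ x = 1 ∨ τ x = -1) ∧ (∀ x ∈ U, τ x = σ x) ∧
    2 * k = {p : V × V | G.Adj p.1 p.2 ∧ τ p.1 ≠ τ p.2}.ncard }

/-- The defining property of the core. -/
def CoreProp {V : Type*} (G : SimpleGraph V) (σ : V → ℤ) (dp dm c : ℝ) (U : Set V) : Prop :=
  ∀ u ∈ U,
    |(({w | G.Adj u w ∧ σ u * σ w = 1}.ncard : ℝ) - dp)| ≤ c / 4 * Real.sqrt (dp * Real.log dp) ∧
    |(({w | G.Adj u w ∧ σ u * σ w = -1}.ncard : ℝ) - dm)| ≤ c / 4 * Real.sqrt (dp * Real.log dp) ∧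
    ({w | G.Adj u w} \ U).ncard ≤ 100

/-- The core: the largest subset satisfying `CoreProp`, i.e. the union of all such subsets. -/
def coreSet {V : Type*} (G : SimpleGraph V) (σ : V → ℤ) (dp dm c : ℝ) : Set V :=
  ⋃₀ { U | CoreProp G σ dp dm c U }

/-- The sets `C_v^{(t)}`. -/
def CvStage {V : Type*} (G : SimpleGraph V) (K : Set V) (v : V) : ℕ → Set V
  | 0 => {v} ∪ {w | G.Adj v w}
  | t + 1 => CvStage G K v t ∪ ⋃ u ∈ (CvStage G K v t \ K), {w | G.Adj u w}

/-- The set `C_v = ⋃_t C_v^{(t)}`. -/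
def CvSet {V : Type*} (G : SimpleGraph V) (K : Set V) (v : V) : Set V :=
  ⋃ t, CvStage G K v t

/-- Warning Propagation messages `μ_{v→w}(t | G, σ)` with initial condition `σ` on `U`. -/
def wpMsg {V : Type*} (G : SimpleGraph V) [∀ v : V, Fintype (G.neighborSet v)]
    (U : Set V) (σ : V → ℤ) : ℕ → V → V → ℤ
  | 0, v, _ => if v ∈ U then σ v else 0
  | t + 1, v, w => psiZ (∑ u ∈ (G.neighborFinset v).erase w, wpMsg G U σ t u v)

/-- `μ_v(t|G,σ) = ∑_{w ∈ ∂v} μ_{w→v}(t|G,σ)`. -/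
def wpVal {V : Type*} (G : SimpleGraph V) [∀ v : V, Fintype (G.neighborSet v)]
    (U : Set V) (σ : V → ℤ) (t : ℕ) (v : V) : ℤ :=
  ∑ w ∈ G.neighborFinset v, wpMsg G U σ t w v

/-- The maximum distance from `w` to any vertex reachable from `w` in `G`. -/
def hgt {V : Type*} (G : SimpleGraph V) (w : V) : ℕ :=
  sSup ((G.dist w) '' { u | G.Reachable w u })

/-- `G_v`: the subgraph of `G` induced on `C_v` (ambient form). -/
def GvG {V : Type*} (G : SimpleGraph V) (K : Set V) (v : V) : SimpleGraph V :=
  restrictG G (CvSet G K v)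

/-- `w_{↑v}`: the neighbour of `w` on the path from `w` to `v` in `G_v`. -/
def parentOf {V : Type*} (G : SimpleGraph V) (K : Set V) (v w : V) : V :=
  @Classical.epsilon V ⟨v⟩ fun x =>
    (GvG G K v).Adj w x ∧ (GvG G K v).dist x v + 1 = (GvG G K v).dist w v

/-- `G_v` with the edge `{w, w_{↑v}}` removed. -/
def GdelG {V : Type*} (G : SimpleGraph V) (K : Set V) (v w : V) : SimpleGraph V :=
  (GvG G K v).deleteEdges {s(w, parentOf G K v w)}

/-- `h_{w→v}`: the maximum distance between `w` and any other vertex of `G_{w→v}`. -/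
def hdir {V : Type*} (G : SimpleGraph V) (K : Set V) (v w : V) : ℕ :=
  hgt (GdelG G K v w) w

/-- `C_{w→v}`: the vertex set of the component of `w` in `G_v` minus the edge `{w, w_{↑v}}`. -/
def Cdir {V : Type*} (G : SimpleGraph V) (K : Set V) (v w : V) : Set V :=
  { u | (GdelG G K v w).Reachable w u }

/-- `G_{w→v}`: the component of `w` in `G_v` minus the edge `{w, w_{↑v}}`. -/
def Gdir {V : Type*} (G : SimpleGraph V) (K : Set V) (v w : V) : SimpleGraph V :=
  restrictG (GdelG G K v w) (Cdir G K v w)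

/-- `h_v`: the maximum distance between `v` and any other vertex of `G_v`. -/
def hvG {V : Type*} (G : SimpleGraph V) (K : Set V) (v : V) : ℕ :=
  hgt (GvG G K v) v

/-- `μ*_{w→v} = μ_{w→w_{↑v}}(h_{w→v}+1 | G, σ)`. -/
def muStarDir {V : Type*} (G : SimpleGraph V) [∀ v : V, Fintype (G.neighborSet v)]
    (K : Set V) (σ : V → ℤ) (v w : V) : ℤ :=
  wpMsg G Set.univ σ (hdir G K v w + 1) w (parentOf G K v w)

/-- `μ*_v = μ_v(h_v+1 | G, σ)`. -/
def muStarV {V : Type*} (G : SimpleGraph V) [∀ v : V, Fintype (G.neighborSet v)]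
    (K : Set V) (σ : V → ℤ) (v : V) : ℤ :=
  wpVal G Set.univ σ (hvG G K v + 1) v

/-- The ball of radius `t` around `v` in `G`. -/
def ballSet {V : Type*} (G : SimpleGraph V) (v : V) (t : ℕ) : Set V :=
  { u | G.Reachable v u ∧ G.dist v u ≤ t }

lemma mem_ballSet_self {V : Type*} (G : SimpleGraph V) (v : V) (t : ℕ) : v ∈ ballSet G v t :=
  ⟨SimpleGraph.Reachable.refl v, by simp [SimpleGraph.dist_self]⟩

/-- `∂^t(G,r,σ) ≅ ∂^t(H,r',τ)`: a root- and label-preserving isomorphism between the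
balls of radius `t`. -/
def RootedBallIso {V W : Type*} (G : SimpleGraph V) (σ : V → ℤ) (r : V)
    (H : SimpleGraph W) (τ : W → ℤ) (r' : W) (t : ℕ) : Prop :=
  ∃ φ : (G.induce (ballSet G r t)) ≃g (H.induce (ballSet H r' t)),
    φ ⟨r, mem_ballSet_self G r t⟩ = ⟨r', mem_ballSet_self H r' t⟩ ∧
    ∀ x, τ (φ x).1 = σ x.1





/-! ### The planted bisection model -/

/-- `σ` is a balanced bipartition: the two class sizes differ by at most one. -/
def BalancedPart {n : ℕ} (σ : Fin n → Bool) : Prop :=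
  (((Finset.univ.filter (fun v => σ v = true)).card : ℤ)
    - ((Finset.univ.filter (fun v => σ v = false)).card : ℤ)).natAbs ≤ 1

/-- The number of balanced bipartitions of `Fin n`. -/
def Nbal (n : ℕ) : ℕ := (Finset.univ.filter (fun σ : Fin n → Bool => BalancedPart σ)).card

/-- The probability `p_{σ(v)σ(w)}` of the edge `{v,w}`, where `p₊ = 2d₊/n`, `p₋ = 2d₋/n`. -/
def pairProb (dp dm : ℝ) (n : ℕ) (σ : Fin n → Bool) (v w : Fin n) : ℝ :=
  if σ v = σ w then 2 * dp / n else 2 * dm / n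

/-- The probability mass of an outcome `ω = (σ, g)` of the planted bisection model
`G(n, 2d₊/n, 2d₋/n)`: `σ` is a uniformly random balanced bipartition and, independently
for each pair `v ≠ w`, the edge `{v,w}` is present with probability `p_{σ(v)σ(w)}`. -/
def pbMass (dp dm : ℝ) (n : ℕ) (ω : (Fin n → Bool) × (Fin n → Fin n → Bool)) : ℝ :=
  (if BalancedPart ω.1 ∧ (∀ v w, ω.2 v w = ω.2 w v) ∧ (∀ v, ω.2 v v = false)
    then ((Nbal n : ℝ))⁻¹ else 0) *
  ∏ p ∈ Finset.univ.filter (fun p : Fin n × Fin n => p.1 < p.2),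
    (if ω.2 p.1 p.2 = true then pairProb dp dm n ω.1 p.1 p.2
      else 1 - pairProb dp dm n ω.1 p.1 p.2)

/-- The probability of an event in the planted bisection model. -/
def pbPr (dp dm : ℝ) (n : ℕ) (A : (Fin n → Bool) × (Fin n → Fin n → Bool) → Prop) : ℝ :=
  ∑ ω ∈ Finset.univ.filter A, pbMass dp dm n ω

/-- Sign of a Boolean, as `±1`. -/
def sgnB (b : Bool) : ℤ := if b then 1 else -1

/-- The planted assignment `σ : [n] → {±1}` of an outcome. -/
def pbSigma {n : ℕ} (ω : (Fin n → Bool) × (Fin n → Fin n → Bool)) : Fin n → ℤ :=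
  fun v => sgnB (ω.1 v)

/-- The graph of an outcome. -/
def pbGraph (n : ℕ) (g : Fin n → Fin n → Bool) : SimpleGraph (Fin n) :=
  SimpleGraph.fromRel fun v w => g v w = true

/-- The minimum bisection width `bis(G)`: the least number of edges joining `S` and its
complement over all `S` with `||S| - |S̄|| ≤ 1`. -/
def bisWidth {n : ℕ} (G : SimpleGraph (Fin n)) : ℕ :=
  sInf { k | ∃ S : Finset (Fin n),
    ((S.card : ℤ) - ((n : ℤ) - (S.card : ℤ))).natAbs ≤ 1 ∧
    k = {p : Fin n × Fin n | G.Adj p.1 p.2 ∧ p.1 ∈ S ∧ p.2 ∉ S}.ncard }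

/-! ### Finite rooted typed trees and the two-type Galton–Watson tree -/

/-- Finite rooted trees whose vertices carry a type in `ℤ` (used with types `±1`). -/
inductive GWT : Type
  | node : ℤ → List GWT → GWT

instance : Inhabited GWT := ⟨.node 0 []⟩

/-- The type of the root. -/
def GWT.typeOf : GWT → ℤ
  | .node s _ => s

/-- The subtrees pending on the children of the root. -/
def GWT.childrenOf : GWT → List GWT
  | .node _ l => l

/-- Valid positions (vertices) of a tree, encoded as lists of child indices. -/
def GWT.valid : GWT → List ℕ → Prop
  | _, [] => True
  | T, i :: p => i < T.childrenOf.length ∧ GWT.valid (T.childrenOf.getD i default) p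

/-- The type of the vertex at position `q`. -/
def GWT.typeAt : GWT → List ℕ → ℤ
  | T, [] => T.typeOf
  | T, i :: p => GWT.typeAt (T.childrenOf.getD i default) p

/-- The tree as a simple graph on its set of positions. -/
def GWT.graph (T : GWT) : SimpleGraph { p : List ℕ // T.valid p } where
  Adj a b := (∃ i : ℕ, (b : List ℕ) = (a : List ℕ) ++ [i]) ∨
             (∃ i : ℕ, (a : List ℕ) = (b : List ℕ) ++ [i])
  symm := ⟨fun a b h => h.symm⟩
  loopless := ⟨fun a h => by
    rcases h with ⟨i, hi⟩ | ⟨i, hi⟩ <;>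
      · have := congrArg List.length hi
        simp at this⟩

/-- The root of the tree. -/
def GWT.root (T : GWT) : { p : List ℕ // T.valid p } := ⟨[], trivial⟩

/-- The type labelling of the vertices. -/
def GWT.lab (T : GWT) : { p : List ℕ // T.valid p } → ℤ := fun q => T.typeAt q.1

/-- The Warning Propagation message `μ_{r↑}(t)` sent by the root of a tree towards its
(imaginary) parent, when the messages are initialised with the types. -/
def GWT.rootMsg : ℕ → GWT → ℤ
  | 0, T => T.typeOf
  | t + 1, T => psiZ ((T.childrenOf.map (GWT.rootMsg t)).sum)

/-- The probability mass function of the depth-`t` truncation of the two-type Galton–Watson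
tree with root type `s`, realised as a random *ordered* tree: the root spawns `Po(d₊ + d₋)`
children, each independently of type `s` with probability `d₊/(d₊+d₋)` and of type `-s`
with probability `d₋/(d₊+d₋)`, and the subtrees pending on the children are independent
Galton–Watson trees truncated at depth `t-1`. -/
def ogwMass (dp dm : ℝ) : ℕ → ℤ → GWT → ℝ
  | 0, s, T => if T.typeOf = s ∧ T.childrenOf = [] then 1 else 0
  | t + 1, s, T =>
    if T.typeOf = s then
      Real.exp (-(dp + dm)) / (Nat.factorial T.childrenOf.length) *
        (T.childrenOf.map fun U => (if U.typeOf = s then dp else dm)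
          * ogwMass dp dm t U.typeOf U).prod
    else 0


end

section Part0

lemma psiZ_eq_zero {x : ℤ} : psiZ x = 0 ↔ x = 0 := by unfold psiZ; omega

lemma psiZ_le_one (x : ℤ) : psiZ x ≤ 1 := by unfold psiZ; omega

lemma neg_one_le_psiZ (x : ℤ) : -1 ≤ psiZ x := by unfold psiZ; omega

lemma psiZ_eq_one {x : ℤ} (h : 1 ≤ x) : psiZ x = 1 := by unfold psiZ; omega

lemma psiZ_eq_neg_one {x : ℤ} (h : x ≤ -1) : psiZ x = -1 := by unfold psiZ; omega

lemma min_diff_eq_psiZ (a b : ℕ) :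
    (min (a + 1) b : ℤ) - (min a (b + 1) : ℤ) = psiZ ((b : ℤ) - a) := by
  unfold psiZ; push_cast; omega

lemma even_card_of_symm {V : Type*} (P : Finset (V × V))
    (hs : ∀ p ∈ P, (p.2, p.1) ∈ P) (hi : ∀ p ∈ P, p.1 ≠ p.2) : Even P.card := by
  classical
  induction P using Finset.strongInduction with
  | _ P ih =>
    rcases P.eq_empty_or_nonempty with rfl | ⟨p, hp⟩
    · simp
    · have hps : (p.2, p.1) ∈ P := hs p hp
      have hpi : p.1 ≠ p.2 := hi p hp
      have hne : (p.2, p.1) ≠ p := by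
        intro h
        apply hpi
        have := congrArg Prod.fst h
        simpa using this.symm
      set Q := (P.erase p).erase (p.2, p.1) with hQ
      have hQsub : Q ⊆ P := (Finset.erase_subset _ _).trans (Finset.erase_subset _ _)
      have hQss : Q ⊂ P := Finset.ssubset_iff_of_subset hQsub |>.mpr
        ⟨p, hp, by simp [hQ]⟩
      have hmem : (p.2, p.1) ∈ P.erase p := Finset.mem_erase.mpr ⟨hne, hps⟩
      have hcard : P.card = Q.card + 2 := by
        have h1 : (P.erase p).card = P.card - 1 := Finset.card_erase_of_mem hp
        have h2 : Q.card = (P.erase p).card - 1 := Finset.card_erase_of_mem hmem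
        have h3 : 0 < P.card := Finset.card_pos.mpr ⟨p, hp⟩
        have h4 : 0 < (P.erase p).card := Finset.card_pos.mpr ⟨_, hmem⟩
        omega
      have hQeven : Even Q.card := by
        refine ih Q hQss (fun q hq => ?_) (fun q hq => hi q (hQsub hq))
        have hqP : q ∈ P := hQsub hq
        have hqs : (q.2, q.1) ∈ P := hs q hqP
        simp only [hQ, Finset.mem_erase] at hq ⊢
        have hqq : q = ((q.2, q.1).2, (q.2, q.1).1) := rfl
        exact ⟨fun h => hq.2.1 (by rw [hqq, h]), fun h => hq.1 (by rw [hqq, h]), hqs⟩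
      rw [hcard]
      exact hQeven.add (by decide)

end Part0

section Part1
variable {V : Type*}

/-- feasible colourings for the cut problem -/
def Feas (U : Set V) (σ' : V → ℤ) (τ : V → ℤ) : Prop :=
  (∀ x, τ x = 1 ∨ τ x = -1) ∧ (∀ x ∈ U, τ x = σ' x)

noncomputable def pairCount (F : Finset V) (H : SimpleGraph V) (τ : V → ℤ) : ℕ :=
  ((F ×ˢ F).filter (fun p => H.Adj p.1 p.2 ∧ τ p.1 ≠ τ p.2)).card

lemma pairCount_even (F : Finset V) (H : SimpleGraph V) (τ : V → ℤ) :
    Even (pairCount F H τ) := by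
  refine even_card_of_symm _ (fun p hp => ?_) (fun p hp => ?_)
  · simp only [Finset.mem_filter, Finset.mem_product] at hp ⊢
    exact ⟨⟨hp.1.2, hp.1.1⟩, hp.2.1.symm, hp.2.2.symm⟩
  · simp only [Finset.mem_filter] at hp
    exact fun h => (hp.2.2 (by rw [h]))

lemma ncard_eq_pairCount {H : SimpleGraph V} {F : Finset V}
    (hedge : ∀ a b, H.Adj a b → a ∈ F ∧ b ∈ F) (τ : V → ℤ) :
    {p : V × V | H.Adj p.1 p.2 ∧ τ p.1 ≠ τ p.2}.ncard = pairCount F H τ := by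
  have : {p : V × V | H.Adj p.1 p.2 ∧ τ p.1 ≠ τ p.2}
      = ↑((F ×ˢ F).filter (fun p => H.Adj p.1 p.2 ∧ τ p.1 ≠ τ p.2)) := by
    ext ⟨a, b⟩
    simp only [Set.mem_setOf_eq, Finset.coe_filter, Finset.mem_product]
    exact ⟨fun h => ⟨⟨(hedge a b h.1).1, (hedge a b h.1).2⟩, h⟩, fun h => h.2⟩
  rw [this, Set.ncard_coe_finset]; rfl

lemma two_mul_cutW_le {H : SimpleGraph V} {U : Set V} {σ' : V → ℤ} {F : Finset V}
    (hedge : ∀ a b, H.Adj a b → a ∈ F ∧ b ∈ F) {τ : V → ℤ} (hfe : Feas U σ' τ) :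
    2 * cutW H U σ' ≤ pairCount F H τ := by
  obtain ⟨k, hk⟩ := pairCount_even F H τ
  have hmem : k ∈ { k | ∃ τ : V → ℤ, (∀ x, τ x = 1 ∨ τ x = -1) ∧ (∀ x ∈ U, τ x = σ' x) ∧
      2 * k = {p : V × V | H.Adj p.1 p.2 ∧ τ p.1 ≠ τ p.2}.ncard } :=
    ⟨τ, hfe.1, hfe.2, by rw [ncard_eq_pairCount hedge]; omega⟩
  have hle : cutW H U σ' ≤ k := Nat.sInf_le hmem
  omega

lemma cutW_exists_opt {H : SimpleGraph V} {U : Set V} {σ' : V → ℤ} (F : Finset V)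
    (hedge : ∀ a b, H.Adj a b → a ∈ F ∧ b ∈ F) (hne : ∃ τ, Feas U σ' τ) :
    ∃ τ, Feas U σ' τ ∧ 2 * cutW H U σ' = pairCount F H τ := by
  obtain ⟨τ₀, h₀⟩ := hne
  obtain ⟨k₀, hk₀⟩ := pairCount_even F H τ₀
  have hmem : cutW H U σ' ∈ { k | ∃ τ : V → ℤ, (∀ x, τ x = 1 ∨ τ x = -1) ∧
      (∀ x ∈ U, τ x = σ' x) ∧
      2 * k = {p : V × V | H.Adj p.1 p.2 ∧ τ p.1 ≠ τ p.2}.ncard } :=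
    Nat.sInf_mem ⟨k₀, τ₀, h₀.1, h₀.2, by rw [ncard_eq_pairCount hedge]; omega⟩
  obtain ⟨τ, h1, h2, h3⟩ := hmem
  exact ⟨τ, ⟨h1, h2⟩, by rw [h3, ncard_eq_pairCount hedge]⟩

/-- edge mismatch cost -/
def ez (z y : ℤ) : ℕ := if z = y then 0 else 1

end Part1
section Part2
variable {V : Type*}

noncomputable def cWv (KS : Set V) (σ : V → ℤ) (Hx : V → SimpleGraph V) (Cx : V → Set V)
    (x : V) (y : ℤ) : ℕ :=
  cutW (Hx x) (Cx x ∩ ({x} ∪ KS)) (fun a => if a = x then y else σ a)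

noncomputable def gval (KS : Set V) (σ : V → ℤ) (Hx : V → SimpleGraph V) (Cx : V → Set V)
    (x : V) (z : ℤ) : ℕ :=
  if x ∈ KS then cWv KS σ Hx Cx x (σ x) + ez z (σ x)
  else min (cWv KS σ Hx Cx x 1 + ez z 1) (cWv KS σ Hx Cx x (-1) + ez z (-1))

lemma cut_hub (F : Finset V) (H : SimpleGraph V) (KS : Set V) (σ : V → ℤ)
    (hσ : ∀ x, σ x = 1 ∨ σ x = -1)
    (w : V) (hwF : w ∈ F) (X : Finset V) (hXF : ∀ x ∈ X, x ∈ F) (hwX : w ∉ X)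
    (Hx : V → SimpleGraph V) (Cx : V → Set V)
    (hmem : ∀ x ∈ X, x ∈ Cx x) (hwC : ∀ x ∈ X, w ∉ Cx x)
    (hCF : ∀ x ∈ X, ∀ a ∈ Cx x, a ∈ F)
    (hdisj : ∀ x ∈ X, ∀ x' ∈ X, x ≠ x' → ∀ a, a ∈ Cx x → a ∈ Cx x' → False)
    (hadj : ∀ a b, H.Adj a b ↔ ((a = w ∧ b ∈ X) ∨ (b = w ∧ a ∈ X) ∨ ∃ x ∈ X, (Hx x).Adj a b))
    (hadjC : ∀ x ∈ X, ∀ a b, (Hx x).Adj a b → a ∈ Cx x ∧ b ∈ Cx x)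
    (CW : Set V) (hCW : ∀ a, a ∈ CW ↔ (a = w ∨ ∃ x ∈ X, a ∈ Cx x))
    (z : ℤ) (hz : z = 1 ∨ z = -1) :
    cutW H (CW ∩ ({w} ∪ KS)) (fun a => if a = w then z else σ a)
      = ∑ x ∈ X, gval KS σ Hx Cx x z := by
  classical
  set σ'z : V → ℤ := fun a => if a = w then z else σ a with hσ'z
  have hσ'pm : ∀ a, σ'z a = 1 ∨ σ'z a = -1 := by
    intro a; by_cases h : a = w <;> simp [hσ'z, h, hz, hσ a]
  have hXne : ∀ x ∈ X, x ≠ w := fun x hx h => hwX (h ▸ hx)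
  have hedgex : ∀ x ∈ X, ∀ a b, (Hx x).Adj a b → a ∈ F ∧ b ∈ F := by
    intro x hx a b hab
    obtain ⟨ha, hb⟩ := hadjC x hx a b hab
    exact ⟨hCF x hx a ha, hCF x hx b hb⟩
  have hedgeH : ∀ a b, H.Adj a b → a ∈ F ∧ b ∈ F := by
    intro a b hab
    rcases (hadj a b).mp hab with ⟨rfl, hb⟩ | ⟨rfl, ha⟩ | ⟨x, hx, hH⟩
    · exact ⟨hwF, hXF _ hb⟩
    · exact ⟨hXF _ ha, hwF⟩
    · exact hedgex x hx a b hH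
  have hHxnotw : ∀ x ∈ X, ∀ a b, (Hx x).Adj a b → a ≠ w ∧ b ≠ w := by
    intro x hx a b hab
    obtain ⟨ha, hb⟩ := hadjC x hx a b hab
    exact ⟨fun h => hwC x hx (h ▸ ha), fun h => hwC x hx (h ▸ hb)⟩
  have hwmemCW : w ∈ CW := (hCW w).mpr (Or.inl rfl)
  -- the key counting identity
  have key : ∀ τ : V → ℤ, τ w = z →
      pairCount F H τ = ∑ x ∈ X, (pairCount F (Hx x) τ + 2 * ez z (τ x)) := by
    intro τ hτw
    have hsplit : ((F ×ˢ F).filter (fun p => H.Adj p.1 p.2 ∧ τ p.1 ≠ τ p.2))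
        = X.biUnion (fun x =>
            ((F ×ˢ F).filter (fun p => (Hx x).Adj p.1 p.2 ∧ τ p.1 ≠ τ p.2))
            ∪ (if τ w = τ x then (∅ : Finset (V × V)) else {(w, x), (x, w)})) := by
      ext ⟨a, b⟩
      simp only [Finset.mem_biUnion, Finset.mem_union, Finset.mem_filter, Finset.mem_product]
      constructor
      · rintro ⟨⟨haF, hbF⟩, hHab, hne⟩
        rcases (hadj a b).mp hHab with ⟨rfl, hb⟩ | ⟨rfl, ha⟩ | ⟨x, hx, hH⟩
        · refine ⟨b, hb, Or.inr ?_⟩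
          rw [if_neg (by rw [hτw] at hne ⊢; exact hne)]
          simp
        · refine ⟨a, ha, Or.inr ?_⟩
          rw [if_neg (by rw [hτw] at hne ⊢; exact fun h => hne h.symm)]
          simp
        · exact ⟨x, hx, Or.inl ⟨⟨haF, hbF⟩, hH, hne⟩⟩
      · rintro ⟨x, hx, ⟨hF, hH, hne⟩ | hcross⟩
        · exact ⟨hF, (hadj a b).mpr (Or.inr (Or.inr ⟨x, hx, hH⟩)), hne⟩
        · by_cases hc : τ w = τ x
          · rw [if_pos hc] at hcross; exact absurd hcross (by simp)
          · rw [if_neg hc] at hcross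
            simp only [Finset.mem_insert, Finset.mem_singleton, Prod.mk.injEq] at hcross
            rcases hcross with ⟨ha, hb⟩ | ⟨ha, hb⟩
            · subst ha; subst hb
              exact ⟨⟨hwF, hXF _ hx⟩, (hadj _ _).mpr (Or.inl ⟨rfl, hx⟩), hc⟩
            · subst ha; subst hb
              exact ⟨⟨hXF _ hx, hwF⟩, (hadj _ _).mpr (Or.inr (Or.inl ⟨rfl, hx⟩)),
                fun h => hc h.symm⟩
    have hdisjU : ∀ x ∈ X, ∀ x' ∈ X, x ≠ x' →
        Disjoint (((F ×ˢ F).filter (fun p => (Hx x).Adj p.1 p.2 ∧ τ p.1 ≠ τ p.2))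
            ∪ (if τ w = τ x then (∅ : Finset (V × V)) else {(w, x), (x, w)}))
          (((F ×ˢ F).filter (fun p => (Hx x').Adj p.1 p.2 ∧ τ p.1 ≠ τ p.2))
            ∪ (if τ w = τ x' then (∅ : Finset (V × V)) else {(w, x'), (x', w)})) := by
      intro x hx x' hx' hne
      rw [Finset.disjoint_left]
      rintro ⟨a, b⟩ hab hab'
      simp only [Finset.mem_union, Finset.mem_filter] at hab hab'
      have hcr : ∀ y, y ∈ X → (a, b) ∈ (if τ w = τ y then (∅ : Finset (V × V))
          else {(w, y), (y, w)}) → (a = w ∧ b = y) ∨ (a = y ∧ b = w) := by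
        intro y hy hmem'
        by_cases hc : τ w = τ y
        · rw [if_pos hc] at hmem'; exact absurd hmem' (by simp)
        · rw [if_neg hc] at hmem'
          simpa [Prod.mk.injEq] using hmem'
      rcases hab with ⟨_, hH, _⟩ | hcross
      · rcases hab' with ⟨_, hH', _⟩ | hcross'
        · exact hdisj x hx x' hx' hne a (hadjC x hx a b hH).1 (hadjC x' hx' a b hH').1
        · rcases hcr x' hx' hcross' with ⟨ha, hb⟩ | ⟨ha, hb⟩
          · exact (hHxnotw x hx _ _ hH).1 ha
          · exact (hHxnotw x hx _ _ hH).2 hb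
      · rcases hab' with ⟨_, hH', _⟩ | hcross'
        · rcases hcr x hx hcross with ⟨ha, hb⟩ | ⟨ha, hb⟩
          · exact (hHxnotw x' hx' _ _ hH').1 ha
          · exact (hHxnotw x' hx' _ _ hH').2 hb
        · rcases hcr x hx hcross with ⟨ha1, hb1⟩ | ⟨ha1, hb1⟩
          · rcases hcr x' hx' hcross' with ⟨ha2, hb2⟩ | ⟨ha2, hb2⟩
            · exact hne (hb1.symm.trans hb2)
            · exact hXne x' hx' (ha2.symm.trans ha1)
          · rcases hcr x' hx' hcross' with ⟨ha2, hb2⟩ | ⟨ha2, hb2⟩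
            · exact hXne x hx (ha1.symm.trans ha2)
            · exact hne (ha1.symm.trans ha2)
    rw [pairCount, hsplit, Finset.card_biUnion hdisjU]
    refine Finset.sum_congr rfl ?_
    intro x hx
    have hdisj2 : Disjoint ((F ×ˢ F).filter (fun p => (Hx x).Adj p.1 p.2 ∧ τ p.1 ≠ τ p.2))
        (if τ w = τ x then (∅ : Finset (V × V)) else {(w, x), (x, w)}) := by
      rw [Finset.disjoint_left]
      rintro ⟨a, b⟩ hab hab'
      simp only [Finset.mem_filter] at hab
      by_cases hc : τ w = τ x
      · rw [if_pos hc] at hab'; exact absurd hab' (by simp)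
      · rw [if_neg hc] at hab'
        simp only [Finset.mem_insert, Finset.mem_singleton, Prod.mk.injEq] at hab'
        rcases hab' with ⟨ha, hb⟩ | ⟨ha, hb⟩
        · exact (hHxnotw x hx _ _ hab.2.1).1 ha
        · exact (hHxnotw x hx _ _ hab.2.1).2 hb
    rw [Finset.card_union_of_disjoint hdisj2, pairCount]
    congr 1
    by_cases hc : τ w = τ x
    · rw [if_pos hc, ez, if_pos (hτw ▸ hc)]; simp
    · rw [if_neg hc, ez, if_neg (hτw ▸ hc)]
      rw [Finset.card_insert_of_notMem (by
        simp only [Finset.mem_singleton, Prod.mk.injEq]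
        exact fun h => hXne x hx (h.1.symm ▸ h.2.symm ▸ rfl)), Finset.card_singleton]
  -- upper bound
  set yx : V → ℤ := fun x => if x ∈ KS then σ x
    else if cWv KS σ Hx Cx x 1 + ez z 1 ≤ cWv KS σ Hx Cx x (-1) + ez z (-1) then 1 else -1
    with hyx
  have hyxpm : ∀ x, yx x = 1 ∨ yx x = -1 := by
    intro x
    by_cases h : x ∈ KS
    · simpa [hyx, h] using hσ x
    · by_cases h2 : cWv KS σ Hx Cx x 1 + ez z 1 ≤ cWv KS σ Hx Cx x (-1) + ez z (-1) <;>
        simp [hyx, h, h2]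
  have hgv : ∀ x, cWv KS σ Hx Cx x (yx x) + ez z (yx x) = gval KS σ Hx Cx x z := by
    intro x
    by_cases h : x ∈ KS
    · simp [hyx, gval, h]
    · by_cases h2 : cWv KS σ Hx Cx x 1 + ez z 1 ≤ cWv KS σ Hx Cx x (-1) + ez z (-1)
      · simp only [hyx, gval, if_neg h, if_pos h2]
        exact (min_eq_left h2).symm
      · simp only [hyx, gval, if_neg h, if_neg h2]
        exact (min_eq_right (le_of_not_ge h2)).symm
  have hopt : ∀ x, x ∈ X → ∃ τ', Feas (Cx x ∩ ({x} ∪ KS))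
      (fun a => if a = x then yx x else σ a) τ' ∧
      2 * cWv KS σ Hx Cx x (yx x) = pairCount F (Hx x) τ' := by
    intro x hx
    refine cutW_exists_opt F (hedgex x hx) ⟨fun a => if a = x then yx x else σ a, ?_, fun _ _ => rfl⟩
    intro a
    by_cases h : a = x
    · simpa [h] using hyxpm x
    · simpa [h] using hσ a
  choose τs hfeas hcnt using hopt
  set τg : V → ℤ := fun a => if a = w then z
    else if h : ∃ x, x ∈ X ∧ a ∈ Cx x then τs h.choose h.choose_spec.1 a else σ a with hτg
  have hτgw : τg w = z := by simp [hτg]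
  have hτgon : ∀ x, ∀ hx : x ∈ X, ∀ a ∈ Cx x, τg a = τs x hx a := by
    intro x hx a ha
    have haw : a ≠ w := fun h => hwC x hx (h ▸ ha)
    have hex : ∃ x', x' ∈ X ∧ a ∈ Cx x' := ⟨x, hx, ha⟩
    have hxeq : hex.choose = x := by
      by_contra hcon
      exact hdisj hex.choose hex.choose_spec.1 x hx hcon a hex.choose_spec.2 ha
    simp only [hτg, if_neg haw, dif_pos hex]
    congr 1
  have hτgfe : Feas (CW ∩ ({w} ∪ KS)) σ'z τg := by
    constructor
    · intro a
      by_cases h : a = w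
      · simpa [hτg, h] using hz
      · simp only [hτg, if_neg h]
        by_cases h2 : ∃ x, x ∈ X ∧ a ∈ Cx x
        · rw [dif_pos h2]; exact (hfeas _ h2.choose_spec.1).1 a
        · rw [dif_neg h2]; exact hσ a
    · rintro a ⟨haCW, haU⟩
      by_cases h : a = w
      · subst h; simp [hτg, hσ'z]
      · rcases (hCW a).mp haCW with rfl | ⟨x, hx, ha⟩
        · exact absurd rfl h
        · have haK : a ∈ KS := by
            rcases haU with h' | h'
            · exact absurd h' h
            · exact h'
          rw [hτgon x hx a ha]
          have := (hfeas x hx).2 a (Set.mem_inter ha (Set.mem_union_right _ haK))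
          rw [this]
          by_cases hax : a = x
          · subst hax
            have : yx a = σ a := by simp [hyx, haK]
            simp [this, hσ'z, h]
          · simp [hax, hσ'z, h]
  have hτgx : ∀ x, ∀ hx : x ∈ X, τg x = yx x := by
    intro x hx
    rw [hτgon x hx x (hmem x hx)]
    have := (hfeas x hx).2 x (Set.mem_inter (hmem x hx) (Set.mem_union_left _ rfl))
    simpa using this
  have hpcx : ∀ x, ∀ hx : x ∈ X, pairCount F (Hx x) τg = pairCount F (Hx x) (τs x hx) := by
    intro x hx
    unfold pairCount
    congr 1
    apply Finset.filter_congr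
    rintro ⟨a, b⟩ hab
    constructor
    · rintro ⟨hH, hne⟩
      refine ⟨hH, ?_⟩
      rwa [hτgon x hx a (hadjC x hx a b hH).1, hτgon x hx b (hadjC x hx a b hH).2] at hne
    · rintro ⟨hH, hne⟩
      refine ⟨hH, ?_⟩
      rwa [hτgon x hx a (hadjC x hx a b hH).1, hτgon x hx b (hadjC x hx a b hH).2]
  have hub : 2 * cutW H (CW ∩ ({w} ∪ KS)) σ'z ≤ 2 * ∑ x ∈ X, gval KS σ Hx Cx x z := by
    have h1 : 2 * cutW H (CW ∩ ({w} ∪ KS)) σ'z ≤ pairCount F H τg :=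
      two_mul_cutW_le hedgeH hτgfe
    have h2 : pairCount F H τg = ∑ x ∈ X, (pairCount F (Hx x) τg + 2 * ez z (τg x)) :=
      key τg hτgw
    have h3 : ∀ x ∈ X, pairCount F (Hx x) τg + 2 * ez z (τg x)
        = 2 * gval KS σ Hx Cx x z := by
      intro x hx
      rw [hpcx x hx, ← hcnt x hx, hτgx x hx, ← hgv x]
      ring
    rw [h2, Finset.sum_congr rfl h3, ← Finset.mul_sum] at h1
    exact h1
  -- lower bound
  obtain ⟨τ, hτfe, hτcnt⟩ := cutW_exists_opt (H := H) (U := CW ∩ ({w} ∪ KS)) (σ' := σ'z) F hedgeH ⟨σ'z, hσ'pm, fun _ _ => rfl⟩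
  have hτw : τ w = z := by
    have := hτfe.2 w (Set.mem_inter hwmemCW (Set.mem_union_left _ rfl))
    simpa [hσ'z] using this
  have hlb : 2 * ∑ x ∈ X, gval KS σ Hx Cx x z ≤ 2 * cutW H (CW ∩ ({w} ∪ KS)) σ'z := by
    rw [hτcnt, key τ hτw]
    rw [Finset.mul_sum]
    refine Finset.sum_le_sum ?_
    intro x hx
    have hfx : Feas (Cx x ∩ ({x} ∪ KS)) (fun a => if a = x then τ x else σ a) τ := by
      refine ⟨hτfe.1, ?_⟩
      rintro a ⟨haC, haU⟩
      by_cases hax : a = x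
      · simp [hax]
      · have haK : a ∈ KS := by
          rcases haU with h' | h'
          · exact absurd h' hax
          · exact h'
        have haCW : a ∈ CW := (hCW a).mpr (Or.inr ⟨x, hx, haC⟩)
        have haw : a ≠ w := fun h => hwC x hx (h ▸ haC)
        have := hτfe.2 a ⟨haCW, Or.inr haK⟩
        simp only [hσ'z, if_neg haw] at this
        simp [hax, this]
    have h1 : 2 * cWv KS σ Hx Cx x (τ x) ≤ pairCount F (Hx x) τ :=
      two_mul_cutW_le (hedgex x hx) hfx
    have h2 : gval KS σ Hx Cx x z ≤ cWv KS σ Hx Cx x (τ x) + ez z (τ x) := by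
      by_cases hK : x ∈ KS
      · have hxw : x ≠ w := hXne x hx
        have hτx : τ x = σ x := by
          have := hτfe.2 x (Set.mem_inter ((hCW x).mpr (Or.inr ⟨x, hx, hmem x hx⟩)) (Set.mem_union_right _ hK))
          simpa [hσ'z, hxw] using this
        rw [gval, if_pos hK, hτx]
      · rw [gval, if_neg hK]
        rcases hτfe.1 x with h' | h'
        · rw [h']; exact min_le_left _ _
        · rw [h']; exact min_le_right _ _
    omega
  omega

end Part2



section Part3

open SimpleGraph

variable {V : Type*} {G : SimpleGraph V} {S K : Set V} {v : V}

/-! generic lemmas about `restrictG` -/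

lemma restrictG_adj {a b : V} :
    (restrictG G S).Adj a b ↔ G.Adj a b ∧ a ∈ S ∧ b ∈ S := Iff.rfl

lemma restrict_walk_mem {a b : V} (p : (restrictG G S).Walk a b) (ha : a ∈ S) : b ∈ S := by
  induction p with
  | nil => exact ha
  | cons h q ih => exact ih h.2.2

/-- inclusion homomorphism from the induced graph to the restricted graph -/
def inclH (G : SimpleGraph V) (S : Set V) : (G.induce S) →g (restrictG G S) where
  toFun := Subtype.val
  map_rel' := fun {a b} h => ⟨h, a.2, b.2⟩

lemma exists_lift_walk : ∀ {a b : V} (P : (restrictG G S).Walk a b) (ha : a ∈ S) (hb : b ∈ S),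
    ∃ Q : (G.induce S).Walk ⟨a, ha⟩ ⟨b, hb⟩, Q.map (inclH G S) = P := by
  intro a b P
  induction P with
  | nil => exact fun ha hb => ⟨Walk.nil, rfl⟩
  | @cons a c b h q ih =>
    intro ha hb
    obtain ⟨Q, hQ⟩ := ih h.2.2 hb
    exact ⟨Walk.cons (by exact h.1 : (G.induce S).Adj ⟨a, ha⟩ ⟨c, h.2.2⟩) Q,
      by subst hQ; rfl⟩

lemma restrict_reachable (htree : (G.induce S).IsTree) {a b : V} (ha : a ∈ S) (hb : b ∈ S) :
    (restrictG G S).Reachable a b := by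
  have := htree.isConnected.preconnected ⟨a, ha⟩ ⟨b, hb⟩
  exact this.map (inclH G S)

lemma restrict_path_unique (htree : (G.induce S).IsTree) {a b : V} (ha : a ∈ S) (hb : b ∈ S)
    {P Q : (restrictG G S).Walk a b} (hP : P.IsPath) (hQ : Q.IsPath) : P = Q := by
  obtain ⟨P', hP'⟩ := exists_lift_walk P ha hb
  obtain ⟨Q', hQ'⟩ := exists_lift_walk Q ha hb
  have hinj : Function.Injective (inclH G S) := Subtype.val_injective
  have h1 : P'.IsPath := Walk.IsPath.of_map (f := inclH G S) (hP' ▸ hP)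
  have h2 : Q'.IsPath := Walk.IsPath.of_map (f := inclH G S) (hQ' ▸ hQ)
  have : P' = Q' := ((htree.existsUnique_path ⟨a, ha⟩ ⟨b, hb⟩).unique h1 h2)
  rw [← hP', ← hQ', this]

/-- if a vertex is on a geodesic to `v` and is closer to `v` than the start, in particular
if it is not the start, then its distance is smaller -/
lemma dist_lt_of_mem_geodesic {T : SimpleGraph V} {b u w : V} (R : T.Walk b u)
    (hlen : R.length = T.dist b u) (hw : w ∈ R.support) (hwb : w ≠ b) :
    T.dist w u < T.dist b u := by
  classical
  have h1 : T.dist w u ≤ (R.dropUntil w hw).length := SimpleGraph.dist_le _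
  have h2 : (R.takeUntil w hw).length + (R.dropUntil w hw).length = R.length := by
    rw [← Walk.length_append, Walk.take_spec]
  have h3 : (R.takeUntil w hw).length ≠ 0 := by
    intro h0
    exact hwb (Walk.eq_of_length_eq_zero h0).symm
  omega

/-! facts about `CvSet` -/

lemma mem_CvSet_self (G : SimpleGraph V) (K : Set V) (v : V) : v ∈ CvSet G K v :=
  Set.mem_iUnion.mpr ⟨0, Set.mem_union_left _ rfl⟩

lemma adj_mem_CvSet {x : V} (h : G.Adj v x) : x ∈ CvSet G K v :=
  Set.mem_iUnion.mpr ⟨0, Set.mem_union_right _ h⟩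

lemma CvSet_closed {w x : V} (hw : w ∈ CvSet G K v) (hwK : w ∉ K) (hadj : G.Adj w x) :
    x ∈ CvSet G K v := by
  obtain ⟨t, ht⟩ := Set.mem_iUnion.mp hw
  refine Set.mem_iUnion.mpr ⟨t + 1, Set.mem_union_right _ ?_⟩
  exact Set.mem_biUnion (Set.mem_diff_of_mem ht hwK) hadj

lemma GvG_reach (htree : (G.induce (CvSet G K v)).IsTree) {a b : V}
    (ha : a ∈ CvSet G K v) (hb : b ∈ CvSet G K v) : (GvG G K v).Reachable a b :=
  restrict_reachable htree ha hb

lemma GvG_path_unique (htree : (G.induce (CvSet G K v)).IsTree) {a b : V}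
    (ha : a ∈ CvSet G K v) (hb : b ∈ CvSet G K v) {P Q : (GvG G K v).Walk a b}
    (hP : P.IsPath) (hQ : Q.IsPath) : P = Q :=
  restrict_path_unique htree ha hb hP hQ

lemma GvG_walk_mem {a b : V} (p : (GvG G K v).Walk a b) (ha : a ∈ CvSet G K v) :
    b ∈ CvSet G K v := restrict_walk_mem p ha

lemma GvG_reach_mem {a b : V} (h : (GvG G K v).Reachable a b) (ha : a ∈ CvSet G K v) :
    b ∈ CvSet G K v := by
  obtain ⟨p⟩ := h; exact GvG_walk_mem p ha

/-! the parent map -/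

lemma parent_prop (htree : (G.induce (CvSet G K v)).IsTree) {w : V}
    (hw : w ∈ CvSet G K v) (hwv : w ≠ v) :
    (GvG G K v).Adj w (parentOf G K v w) ∧
      (GvG G K v).dist (parentOf G K v w) v + 1 = (GvG G K v).dist w v := by
  have hex : ∃ x, (GvG G K v).Adj w x ∧
      (GvG G K v).dist x v + 1 = (GvG G K v).dist w v := by
    have hreach : (GvG G K v).Reachable w v :=
      GvG_reach htree hw (mem_CvSet_self G K v)
    have hd0 : (GvG G K v).dist w v ≠ 0 := fun h0 => hwv (hreach.dist_eq_zero_iff.mp h0)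
    obtain ⟨P, hPp, hPlen⟩ := hreach.exists_path_of_dist
    cases P with
    | nil => exact absurd hPlen.symm (by simpa using hd0)
    | @cons _ x _ h q =>
      have hxS : x ∈ CvSet G K v := h.2.2
      have hd1 : (GvG G K v).dist x v ≤ q.length := SimpleGraph.dist_le q
      have hd2 : (GvG G K v).dist w v ≤ (GvG G K v).dist x v + 1 := by
        obtain ⟨P', hP'p, hP'len⟩ :=
          (GvG_reach htree hxS (mem_CvSet_self G K v)).exists_path_of_dist
        have := SimpleGraph.dist_le (Walk.cons h P')
        rw [Walk.length_cons, hP'len] at this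
        omega
      have hlen : q.length + 1 = (GvG G K v).dist w v := by
        rw [← hPlen, Walk.length_cons]
      exact ⟨x, h, by omega⟩
  exact Classical.epsilon_spec hex

lemma parent_unique (htree : (G.induce (CvSet G K v)).IsTree) {w b : V}
    (hw : w ∈ CvSet G K v) (hwv : w ≠ v) (hb : (GvG G K v).Adj w b)
    (hdb : (GvG G K v).dist b v + 1 = (GvG G K v).dist w v) :
    b = parentOf G K v w := by
  classical
  by_contra hne
  obtain ⟨hadjp, hdp⟩ := parent_prop htree hw hwv
  set p := parentOf G K v w with hp
  have hbS : b ∈ CvSet G K v := hb.2.2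
  have hpS : p ∈ CvSet G K v := hadjp.2.2
  obtain ⟨Pb, hPbp, hPblen⟩ :=
    (GvG_reach htree hbS (mem_CvSet_self G K v)).exists_path_of_dist
  obtain ⟨Pp, hPpp, hPplen⟩ :=
    (GvG_reach htree hpS (mem_CvSet_self G K v)).exists_path_of_dist
  have hwb : w ∉ Pb.support := by
    intro hmem
    have := dist_lt_of_mem_geodesic Pb hPblen hmem hb.ne
    omega
  have hwp : w ∉ Pp.support := by
    intro hmem
    have := dist_lt_of_mem_geodesic Pp hPplen hmem hadjp.ne
    omega
  have hP1 : (Walk.cons hb Pb).IsPath := (Walk.cons_isPath_iff hb Pb).mpr ⟨hPbp, hwb⟩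
  have hP2 : (Walk.cons hadjp Pp).IsPath := (Walk.cons_isPath_iff hadjp Pp).mpr ⟨hPpp, hwp⟩
  have heq := GvG_path_unique htree hw (mem_CvSet_self G K v) hP1 hP2
  have := congrArg Walk.support heq
  rw [Walk.support_cons, Walk.support_cons, Walk.support_eq_cons Pb,
    Walk.support_eq_cons Pp] at this
  exact hne (by injection this with _ h2; injection h2 with h3 _)

lemma adj_dist_ne (htree : (G.induce (CvSet G K v)).IsTree) {a b : V}
    (hab : (GvG G K v).Adj a b) : (GvG G K v).dist a v ≠ (GvG G K v).dist b v := by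
  classical
  intro heq
  have haS : a ∈ CvSet G K v := hab.2.1
  have hbS : b ∈ CvSet G K v := hab.2.2
  obtain ⟨Pa, hPap, hPalen⟩ :=
    (GvG_reach htree haS (mem_CvSet_self G K v)).exists_path_of_dist
  obtain ⟨Pb, hPbp, hPblen⟩ :=
    (GvG_reach htree hbS (mem_CvSet_self G K v)).exists_path_of_dist
  have hanb : a ∉ Pb.support := by
    intro hmem
    have := dist_lt_of_mem_geodesic Pb hPblen hmem hab.ne
    omega
  have hW : (Walk.cons hab Pb).IsPath := (Walk.cons_isPath_iff hab Pb).mpr ⟨hPbp, hanb⟩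
  have heq2 := GvG_path_unique htree haS (mem_CvSet_self G K v) hW hPap
  have := congrArg Walk.length heq2
  rw [Walk.length_cons, hPalen, hPblen] at this
  omega

lemma child_facts (htree : (G.induce (CvSet G K v)).IsTree) {w x : V}
    (hw : w ∈ CvSet G K v) (hwv : w ≠ v) (hx : (GvG G K v).Adj w x)
    (hxp : x ≠ parentOf G K v w) :
    parentOf G K v x = w ∧ x ≠ v ∧ x ∈ CvSet G K v := by
  have hxS : x ∈ CvSet G K v := hx.2.2
  obtain ⟨hadjp, hdp⟩ := parent_prop htree hw hwv
  have hreachw : (GvG G K v).Reachable w v :=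
    GvG_reach htree hw (mem_CvSet_self G K v)
  have hdw0 : (GvG G K v).dist w v ≠ 0 := fun h0 => hwv (hreachw.dist_eq_zero_iff.mp h0)
  have h1 : (GvG G K v).dist x v ≤ (GvG G K v).dist w v + 1 := by
    obtain ⟨P', hP'p, hP'len⟩ := hreachw.exists_path_of_dist
    have := SimpleGraph.dist_le (Walk.cons hx.symm P')
    rw [Walk.length_cons, hP'len] at this
    omega
  have h2 : (GvG G K v).dist w v ≤ (GvG G K v).dist x v + 1 := by
    obtain ⟨P', hP'p, hP'len⟩ :=
      (GvG_reach htree hxS (mem_CvSet_self G K v)).exists_path_of_dist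
    have := SimpleGraph.dist_le (Walk.cons hx P')
    rw [Walk.length_cons, hP'len] at this
    omega
  have h3 := adj_dist_ne htree hx
  have hcase : (GvG G K v).dist x v = (GvG G K v).dist w v + 1 ∨
      (GvG G K v).dist w v = (GvG G K v).dist x v + 1 := by omega
  rcases hcase with hc | hc
  · have hxv : x ≠ v := by
      intro h; subst h
      rw [SimpleGraph.dist_self] at hc
      omega
    have := parent_unique htree hxS hxv hx.symm (by omega)
    exact ⟨this.symm, hxv, hxS⟩
  · exact absurd (parent_unique htree hw hwv hx hc.symm) hxp

lemma root_child (htree : (G.induce (CvSet G K v)).IsTree) {x : V}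
    (hx : (GvG G K v).Adj v x) : parentOf G K v x = v ∧ x ≠ v := by
  have hxS : x ∈ CvSet G K v := hx.2.2
  have hxv : x ≠ v := hx.ne'
  have hd1 : (GvG G K v).dist x v ≤ 1 := by
    have := SimpleGraph.dist_le (Walk.cons hx.symm Walk.nil)
    simpa using this
  have hd0 : (GvG G K v).dist x v ≠ 0 := fun h0 =>
    hxv ((GvG_reach htree hxS (mem_CvSet_self G K v)).dist_eq_zero_iff.mp h0)
  have := parent_unique htree hxS hxv hx.symm
    (by rw [SimpleGraph.dist_self]; omega)
  exact ⟨this.symm, hxv⟩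

end Part3


section Part4

open SimpleGraph

variable {V : Type*} {G : SimpleGraph V} {K : Set V} {v : V}

lemma GdelG_adj' {w a b : V} : (GdelG G K v w).Adj a b ↔
    (GvG G K v).Adj a b ∧ s(a, b) ≠ s(w, parentOf G K v w) := by
  simp [GdelG, SimpleGraph.deleteEdges_adj]

lemma Gdir_adj' {w a b : V} : (Gdir G K v w).Adj a b ↔
    (GdelG G K v w).Adj a b ∧ a ∈ Cdir G K v w ∧ b ∈ Cdir G K v w := Iff.rfl

lemma mem_Cdir_self (G : SimpleGraph V) (K : Set V) (v w : V) : w ∈ Cdir G K v w :=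
  Reachable.refl w

lemma Cdir_subset_S {x : V} (hx : x ∈ CvSet G K v) : Cdir G K v x ⊆ CvSet G K v :=
  fun y hy => GvG_reach_mem (Reachable.mono (SimpleGraph.deleteEdges_le _) hy) hx

lemma adj_mem_Cdir {x a b : V} (hab : (GdelG G K v x).Adj a b) (ha : a ∈ Cdir G K v x) :
    b ∈ Cdir G K v x := Reachable.trans ha hab.reachable

lemma walk_transfer_del {w x a b : V} (q : (GdelG G K v w).Walk a b)
    (hws : w ∉ q.support) (hpx : parentOf G K v x = w) :
    ∃ q' : (GdelG G K v x).Walk a b, q'.length = q.length ∧ q'.support = q.support := by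
  have hedges : ∀ e ∈ q.edges, e ∈ (GdelG G K v x).edgeSet := by
    intro e he
    have h2 : e ∈ (GvG G K v).edgeSet :=
      SimpleGraph.edgeSet_mono (SimpleGraph.deleteEdges_le _) (q.edges_subset_edgeSet he)
    simp only [GdelG, SimpleGraph.edgeSet_deleteEdges, Set.mem_diff, Set.mem_singleton_iff]
    refine ⟨h2, ?_⟩
    intro hmem
    rw [hmem, hpx] at he
    exact hws (Walk.snd_mem_support_of_mem_edges q he)
  exact ⟨q.transfer _ hedges, q.length_transfer hedges, q.support_transfer hedges⟩

lemma walk_transfer_up {w a b : V} (q : (GdelG G K v w).Walk a b) :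
    ∃ q' : (GvG G K v).Walk a b, q'.length = q.length ∧ q'.support = q.support ∧
      q'.edges = q.edges := by
  have hedges : ∀ e ∈ q.edges, e ∈ (GvG G K v).edgeSet := fun e he =>
    SimpleGraph.edgeSet_mono (SimpleGraph.deleteEdges_le _) (q.edges_subset_edgeSet he)
  exact ⟨q.transfer _ hedges, q.length_transfer hedges, q.support_transfer hedges,
    q.edges_transfer hedges⟩

lemma parent_not_mem_Cdir (htree : (G.induce (CvSet G K v)).IsTree) {x : V}
    (hx : x ∈ CvSet G K v) (hxv : x ≠ v) :
    parentOf G K v x ∉ Cdir G K v x := by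
  classical
  intro hmem
  obtain ⟨hadj, -⟩ := parent_prop htree hx hxv
  obtain ⟨q0⟩ := (hmem : (GdelG G K v x).Reachable x (parentOf G K v x))
  set q := q0.bypass with hq
  have hqp : q.IsPath := q0.bypass_isPath
  have hedges : ∀ e ∈ q.edges, e ∈ (GvG G K v).edgeSet := fun e he =>
    SimpleGraph.edgeSet_mono (SimpleGraph.deleteEdges_le _) (q.edges_subset_edgeSet he)
  have hP2p : (q.transfer _ hedges).IsPath := hqp.transfer hedges
  have hP1p : (Walk.cons hadj Walk.nil).IsPath := by
    rw [Walk.cons_isPath_iff]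
    exact ⟨Walk.IsPath.nil, by simp [hadj.ne]⟩
  have heq := GvG_path_unique htree hx hadj.2.2 hP1p hP2p
  have h1 : s(x, parentOf G K v x) ∈ (Walk.cons hadj Walk.nil).edges := by simp
  rw [heq, Walk.edges_transfer] at h1
  have h2 := q.edges_subset_edgeSet h1
  simp only [GdelG, SimpleGraph.edgeSet_deleteEdges, Set.mem_diff,
    Set.mem_singleton_iff] at h2
  exact h2.2 trivial

lemma Cdir_path (htree : (G.induce (CvSet G K v)).IsTree) {x : V}
    (hx : x ∈ CvSet G K v) (hxv : x ≠ v) {y : V} (hy : y ∈ Cdir G K v x) :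
    ∃ q : (GdelG G K v x).Walk x y, q.IsPath ∧ parentOf G K v x ∉ q.support := by
  classical
  obtain ⟨q0⟩ := (hy : (GdelG G K v x).Reachable x y)
  refine ⟨q0.bypass, q0.bypass_isPath, ?_⟩
  intro hmem
  exact parent_not_mem_Cdir htree hx hxv ⟨(q0.bypass).takeUntil _ hmem⟩

lemma Cdir_disjoint (htree : (G.induce (CvSet G K v)).IsTree) {x x' y : V}
    (hx : x ∈ CvSet G K v) (hxv : x ≠ v) (hx' : x' ∈ CvSet G K v) (hx'v : x' ≠ v)
    (hpar : parentOf G K v x = parentOf G K v x') (hne : x ≠ x')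
    (hy : y ∈ Cdir G K v x) (hy' : y ∈ Cdir G K v x') : False := by
  obtain ⟨q, hqp, hqw⟩ := Cdir_path htree hx hxv hy
  obtain ⟨q', hq'p, hq'w⟩ := Cdir_path htree hx' hx'v hy'
  obtain ⟨Q, hQlen, hQsupp, hQedges⟩ := walk_transfer_up q
  obtain ⟨Q', hQ'len, hQ'supp, hQ'edges⟩ := walk_transfer_up q'
  have hadjx : (GvG G K v).Adj (parentOf G K v x) x := (parent_prop htree hx hxv).1.symm
  have hadjx' : (GvG G K v).Adj (parentOf G K v x) x' := by
    rw [hpar]; exact (parent_prop htree hx' hx'v).1.symm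
  have hQp : Q.IsPath := by
    rw [Walk.isPath_def, hQsupp, ← Walk.isPath_def]; exact hqp
  have hQ'p : Q'.IsPath := by
    rw [Walk.isPath_def, hQ'supp, ← Walk.isPath_def]; exact hq'p
  have hR1 : (Walk.cons hadjx Q).IsPath := by
    rw [Walk.cons_isPath_iff]
    exact ⟨hQp, by rw [hQsupp]; exact hqw⟩
  have hR2 : (Walk.cons hadjx' Q').IsPath := by
    rw [Walk.cons_isPath_iff]
    refine ⟨hQ'p, ?_⟩
    rw [hQ'supp, hpar]
    exact hq'w
  have heq := GvG_path_unique htree hadjx.2.1 (Cdir_subset_S hx hy) hR1 hR2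
  have := congrArg Walk.support heq
  rw [Walk.support_cons, Walk.support_cons, hQsupp, hQ'supp,
    Walk.support_eq_cons q, Walk.support_eq_cons q'] at this
  injection this with _ h2
  injection h2 with h3 _
  exact hne h3

lemma Cdir_child_subset (htree : (G.induce (CvSet G K v)).IsTree) {w x : V}
    (hw : w ∈ CvSet G K v) (hwv : w ≠ v) (hadj : (GvG G K v).Adj w x)
    (hxp : x ≠ parentOf G K v w) : Cdir G K v x ⊆ Cdir G K v w := by
  obtain ⟨hpx, hxv, hxS⟩ := child_facts htree hw hwv hadj hxp
  intro y hy
  obtain ⟨q, hqp, hqw⟩ := Cdir_path htree hxS hxv hy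
  rw [hpx] at hqw
  -- transfer q to GdelG w : edges avoid w entirely
  have hedges : ∀ e ∈ q.edges, e ∈ (GdelG G K v w).edgeSet := by
    intro e he
    have h2 : e ∈ (GvG G K v).edgeSet :=
      SimpleGraph.edgeSet_mono (SimpleGraph.deleteEdges_le _) (q.edges_subset_edgeSet he)
    simp only [GdelG, SimpleGraph.edgeSet_deleteEdges, Set.mem_diff, Set.mem_singleton_iff]
    refine ⟨h2, ?_⟩
    intro hmem
    rw [hmem] at he
    exact hqw (Walk.fst_mem_support_of_mem_edges q he)
  have hpw : (GvG G K v).Adj w (parentOf G K v w) := (parent_prop htree hw hwv).1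
  have hwx : (GdelG G K v w).Adj w x := by
    rw [GdelG_adj']
    refine ⟨hadj, ?_⟩
    intro hs
    rw [Sym2.eq_iff] at hs
    rcases hs with ⟨-, h2⟩ | ⟨h1, -⟩
    · exact hxp h2
    · exact hpw.ne' h1.symm
  exact ⟨Walk.cons hwx (q.transfer _ hedges)⟩

lemma hub_step (htree : (G.induce (CvSet G K v)).IsTree) {w y : V}
    (hw : w ∈ CvSet G K v) (hwv : w ≠ v) (R : (GdelG G K v w).Walk w y)
    (hR : R.IsPath) (hy : y ≠ w) :
    ∃ x, (GvG G K v).Adj w x ∧ x ≠ parentOf G K v w ∧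
      ∃ q : (GdelG G K v x).Walk x y, q.length + 1 = R.length := by
  cases R with
  | nil => exact absurd rfl hy
  | @cons _ x₁ _ h q =>
    have hadj : (GvG G K v).Adj w x₁ := (GdelG_adj'.mp h).1
    have hx₁p : x₁ ≠ parentOf G K v w := by
      intro hh
      exact (GdelG_adj'.mp h).2 (by rw [hh])
    obtain ⟨hpx₁, hx₁v, hx₁S⟩ := child_facts htree hw hwv hadj hx₁p
    rw [Walk.cons_isPath_iff] at hR
    obtain ⟨q', hq'len, -⟩ := walk_transfer_del q hR.2 hpx₁
    exact ⟨x₁, hadj, hx₁p, q', by rw [hq'len, Walk.length_cons]⟩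

lemma hub_step_root (htree : (G.induce (CvSet G K v)).IsTree) {y : V}
    (R : (GvG G K v).Walk v y) (hR : R.IsPath) (hy : y ≠ v) :
    ∃ x, (GvG G K v).Adj v x ∧ ∃ q : (GdelG G K v x).Walk x y, q.length + 1 = R.length := by
  cases R with
  | nil => exact absurd rfl hy
  | @cons _ x₁ _ h q =>
    obtain ⟨hpx₁, hx₁v⟩ := root_child htree h
    rw [Walk.cons_isPath_iff] at hR
    have hedges : ∀ e ∈ q.edges, e ∈ (GdelG G K v x₁).edgeSet := by
      intro e he
      have h2 : e ∈ (GvG G K v).edgeSet := q.edges_subset_edgeSet he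
      simp only [GdelG, SimpleGraph.edgeSet_deleteEdges, Set.mem_diff, Set.mem_singleton_iff]
      refine ⟨h2, ?_⟩
      intro hmem
      rw [hmem, hpx₁] at he
      exact hR.2 (Walk.snd_mem_support_of_mem_edges q he)
    exact ⟨x₁, h, q.transfer _ hedges, by rw [q.length_transfer hedges, Walk.length_cons]⟩

lemma Cdir_decomp (htree : (G.induce (CvSet G K v)).IsTree) {w y : V}
    (hw : w ∈ CvSet G K v) (hwv : w ≠ v) (hy : y ∈ Cdir G K v w) (hyw : y ≠ w) :
    ∃ x, (GvG G K v).Adj w x ∧ x ≠ parentOf G K v w ∧ y ∈ Cdir G K v x := by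
  classical
  obtain ⟨q0⟩ := (hy : (GdelG G K v w).Reachable w y)
  obtain ⟨x, h1, h2, q, -⟩ := hub_step htree hw hwv q0.bypass q0.bypass_isPath hyw
  exact ⟨x, h1, h2, ⟨q⟩⟩

lemma Cdir_decomp_root (htree : (G.induce (CvSet G K v)).IsTree) {y : V}
    (hy : y ∈ CvSet G K v) (hyv : y ≠ v) :
    ∃ x, (GvG G K v).Adj v x ∧ y ∈ Cdir G K v x := by
  classical
  obtain ⟨q0⟩ := GvG_reach htree (mem_CvSet_self G K v) hy
  obtain ⟨x, h1, q, -⟩ := hub_step_root htree q0.bypass q0.bypass_isPath hyv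
  exact ⟨x, h1, ⟨q⟩⟩

end Part4


section Part5

open SimpleGraph

variable {V : Type*} {G : SimpleGraph V} {K : Set V} {v : V}

lemma hdir_attained (hfin : (CvSet G K v).Finite) {x : V} (hx : x ∈ CvSet G K v) :
    ∃ y ∈ Cdir G K v x, (GdelG G K v x).dist x y = hdir G K v x := by
  have hfin2 : ((GdelG G K v x).dist x '' Cdir G K v x).Finite :=
    ((hfin.subset (Cdir_subset_S hx)).image _)
  have hne : ((GdelG G K v x).dist x '' Cdir G K v x).Nonempty :=
    ⟨0, x, mem_Cdir_self G K v x, SimpleGraph.dist_self⟩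
  obtain ⟨y, hyC, hyd⟩ := Nat.sSup_mem hne hfin2.bddAbove
  exact ⟨y, hyC, hyd⟩

lemma le_hdir (hfin : (CvSet G K v).Finite) {x y : V} (hx : x ∈ CvSet G K v)
    (hy : y ∈ Cdir G K v x) : (GdelG G K v x).dist x y ≤ hdir G K v x :=
  le_csSup ((hfin.subset (Cdir_subset_S hx)).image _).bddAbove ⟨y, hy, rfl⟩

lemma le_hvG (hfin : (CvSet G K v).Finite) {y : V} (hy : (GvG G K v).Reachable v y) :
    (GvG G K v).dist v y ≤ hvG G K v := by
  have hsub : {u | (GvG G K v).Reachable v u} ⊆ CvSet G K v :=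
    fun u hu => GvG_reach_mem hu (mem_CvSet_self G K v)
  exact le_csSup ((hfin.subset hsub).image _).bddAbove ⟨y, hy, rfl⟩

lemma hdir_child_ge (htree : (G.induce (CvSet G K v)).IsTree) (hfin : (CvSet G K v).Finite)
    {w x : V} (hw : w ∈ CvSet G K v) (hwv : w ≠ v) (hadj : (GvG G K v).Adj w x)
    (hxp : x ≠ parentOf G K v w) : hdir G K v x + 1 ≤ hdir G K v w := by
  obtain ⟨hpx, hxv, hxS⟩ := child_facts htree hw hwv hadj hxp
  obtain ⟨y, hyC, hyd⟩ := hdir_attained hfin hxS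
  have hyCw : y ∈ Cdir G K v w := Cdir_child_subset htree hw hwv hadj hxp hyC
  have hyw : y ≠ w := by
    intro h
    rw [h] at hyC
    have hnm := parent_not_mem_Cdir htree hxS hxv
    rw [hpx] at hnm
    exact hnm hyC
  obtain ⟨R, hRp, hRlen⟩ :=
    (hyCw : (GdelG G K v w).Reachable w y).exists_path_of_dist
  obtain ⟨x₁, h1, h2, q, hqlen⟩ := hub_step htree hw hwv R hRp hyw
  obtain ⟨hpx₁, hx₁v, hx₁S⟩ := child_facts htree hw hwv h1 h2
  have hx₁x : x₁ = x := by
    by_contra hne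
    exact Cdir_disjoint htree hx₁S hx₁v hxS hxv (by rw [hpx₁, hpx]) hne ⟨q⟩ hyC
  subst hx₁x
  have hq : (GdelG G K v x₁).dist x₁ y ≤ q.length := SimpleGraph.dist_le q
  have hle := le_hdir hfin hw hyCw
  omega

lemma hdir_root_ge (htree : (G.induce (CvSet G K v)).IsTree) (hfin : (CvSet G K v).Finite)
    {x : V} (hadj : (GvG G K v).Adj v x) : hdir G K v x + 1 ≤ hvG G K v := by
  obtain ⟨hpx, hxv⟩ := root_child htree hadj
  have hxS : x ∈ CvSet G K v := hadj.2.2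
  obtain ⟨y, hyC, hyd⟩ := hdir_attained hfin hxS
  have hyS : y ∈ CvSet G K v := Cdir_subset_S hxS hyC
  have hreach : (GvG G K v).Reachable v y := GvG_reach htree (mem_CvSet_self G K v) hyS
  have hyv : y ≠ v := by
    intro h
    rw [h] at hyC
    have hnm := parent_not_mem_Cdir htree hxS hxv
    rw [hpx] at hnm
    exact hnm hyC
  obtain ⟨R, hRp, hRlen⟩ := hreach.exists_path_of_dist
  obtain ⟨x₁, h1, q, hqlen⟩ := hub_step_root htree R hRp hyv
  obtain ⟨hpx₁, hx₁v⟩ := root_child htree h1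
  have hx₁x : x₁ = x := by
    by_contra hne
    exact Cdir_disjoint htree h1.2.2 hx₁v hxS hxv (by rw [hpx₁, hpx]) hne ⟨q⟩ hyC
  subst hx₁x
  have hq : (GdelG G K v x₁).dist x₁ y ≤ q.length := SimpleGraph.dist_le q
  have hle := le_hvG hfin hreach
  omega

lemma Del_adj_child (htree : (G.induce (CvSet G K v)).IsTree) {w x : V}
    (hw : w ∈ CvSet G K v) (hwv : w ≠ v) (hadj : (GvG G K v).Adj w x)
    (hxp : x ≠ parentOf G K v w) : (GdelG G K v w).Adj w x := by
  have hpw : (GvG G K v).Adj w (parentOf G K v w) := (parent_prop htree hw hwv).1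
  rw [GdelG_adj']
  refine ⟨hadj, ?_⟩
  intro hs
  rw [Sym2.eq_iff] at hs
  rcases hs with ⟨-, h2⟩ | ⟨h1, -⟩
  · exact hxp h2
  · exact hpw.ne' h1.symm

lemma hub_not_mem_child (htree : (G.induce (CvSet G K v)).IsTree) {w x : V}
    (hw : w ∈ CvSet G K v) (hwv : w ≠ v) (hadj : (GvG G K v).Adj w x)
    (hxp : x ≠ parentOf G K v w) : w ∉ Cdir G K v x := by
  obtain ⟨hpx, hxv, hxS⟩ := child_facts htree hw hwv hadj hxp
  have hnm := parent_not_mem_Cdir htree hxS hxv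
  rw [hpx] at hnm
  exact hnm

lemma root_not_mem_child (htree : (G.induce (CvSet G K v)).IsTree) {x : V}
    (hadj : (GvG G K v).Adj v x) : v ∉ Cdir G K v x := by
  obtain ⟨hpx, hxv⟩ := root_child htree hadj
  have hnm := parent_not_mem_Cdir htree hadj.2.2 hxv
  rw [hpx] at hnm
  exact hnm

lemma Gdir_hub_adj (htree : (G.induce (CvSet G K v)).IsTree) {w : V}
    (hw : w ∈ CvSet G K v) (hwv : w ≠ v) {a b : V} :
    (Gdir G K v w).Adj a b ↔
      ((a = w ∧ ((GvG G K v).Adj w b ∧ b ≠ parentOf G K v w)) ∨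
       (b = w ∧ ((GvG G K v).Adj w a ∧ a ≠ parentOf G K v w)) ∨
       (∃ x, ((GvG G K v).Adj w x ∧ x ≠ parentOf G K v w) ∧ (Gdir G K v x).Adj a b)) := by
  constructor
  · rintro ⟨hdel, haC, hbC⟩
    have hGadj : (GvG G K v).Adj a b := (GdelG_adj'.mp hdel).1
    have hsne : s(a, b) ≠ s(w, parentOf G K v w) := (GdelG_adj'.mp hdel).2
    by_cases haw : a = w
    · subst haw
      refine Or.inl ⟨rfl, hGadj, ?_⟩
      intro hb
      exact hsne (by rw [hb])
    · by_cases hbw : b = w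
      · subst hbw
        refine Or.inr (Or.inl ⟨rfl, hGadj.symm, ?_⟩)
        intro ha
        exact hsne (by rw [ha, Sym2.eq_swap])
      · obtain ⟨x, h1, h2, haCx⟩ := Cdir_decomp htree hw hwv haC haw
        obtain ⟨hpx, hxv, hxS⟩ := child_facts htree hw hwv h1 h2
        refine Or.inr (Or.inr ⟨x, ⟨h1, h2⟩, ?_⟩)
        have hdelx : (GdelG G K v x).Adj a b := by
          rw [GdelG_adj']
          refine ⟨hGadj, ?_⟩
          intro hs
          rw [hpx, Sym2.eq_iff] at hs
          rcases hs with ⟨-, h4⟩ | ⟨h3, -⟩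
          · exact hbw h4
          · exact haw h3
        exact ⟨hdelx, haCx, adj_mem_Cdir hdelx haCx⟩
  · rintro (⟨rfl, hb1, hb2⟩ | ⟨rfl, ha1, ha2⟩ | ⟨x, ⟨h1, h2⟩, hdel, haCx, hbCx⟩)
    · have hd := Del_adj_child htree hw hwv hb1 hb2
      exact ⟨hd, mem_Cdir_self G K v a, adj_mem_Cdir hd (mem_Cdir_self G K v a)⟩
    · have hd := Del_adj_child htree hw hwv ha1 ha2
      exact ⟨hd.symm, adj_mem_Cdir hd (mem_Cdir_self G K v b), mem_Cdir_self G K v b⟩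
    · have hnw := hub_not_mem_child htree hw hwv h1 h2
      have haw : a ≠ w := fun h => hnw (h ▸ haCx)
      have hbw : b ≠ w := fun h => hnw (h ▸ hbCx)
      have hGadj : (GvG G K v).Adj a b := (GdelG_adj'.mp hdel).1
      refine ⟨?_, Cdir_child_subset htree hw hwv h1 h2 haCx,
        Cdir_child_subset htree hw hwv h1 h2 hbCx⟩
      rw [GdelG_adj']
      refine ⟨hGadj, ?_⟩
      intro hs
      rw [Sym2.eq_iff] at hs
      rcases hs with ⟨h3, -⟩ | ⟨-, h4⟩
      · exact haw h3
      · exact hbw h4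

lemma GvG_hub_adj (htree : (G.induce (CvSet G K v)).IsTree) {a b : V} :
    (GvG G K v).Adj a b ↔
      ((a = v ∧ ((GvG G K v).Adj v b ∧ True)) ∨
       (b = v ∧ ((GvG G K v).Adj v a ∧ True)) ∨
       (∃ x, ((GvG G K v).Adj v x ∧ True) ∧ (Gdir G K v x).Adj a b)) := by
  constructor
  · intro hGadj
    by_cases haw : a = v
    · subst haw; exact Or.inl ⟨rfl, hGadj, trivial⟩
    · by_cases hbw : b = v
      · subst hbw; exact Or.inr (Or.inl ⟨rfl, hGadj.symm, trivial⟩)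
      · obtain ⟨x, h1, haCx⟩ := Cdir_decomp_root htree hGadj.2.1 haw
        obtain ⟨hpx, hxv⟩ := root_child htree h1
        refine Or.inr (Or.inr ⟨x, ⟨h1, trivial⟩, ?_⟩)
        have hdelx : (GdelG G K v x).Adj a b := by
          rw [GdelG_adj']
          refine ⟨hGadj, ?_⟩
          intro hs
          rw [hpx, Sym2.eq_iff] at hs
          rcases hs with ⟨-, h4⟩ | ⟨h3, -⟩
          · exact hbw h4
          · exact haw h3
        exact ⟨hdelx, haCx, adj_mem_Cdir hdelx haCx⟩
  · rintro (⟨rfl, hb1, -⟩ | ⟨rfl, ha1, -⟩ | ⟨x, ⟨h1, -⟩, hdel, -, -⟩)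
    · exact hb1
    · exact ha1.symm
    · exact (GdelG_adj'.mp hdel).1

end Part5


section Part6

open SimpleGraph

variable {V : Type*} {G : SimpleGraph V} [∀ w : V, Fintype (G.neighborSet w)] {σ : V → ℤ}

lemma wpMsg_zero (U : Set V) (a b : V) :
    wpMsg G U σ 0 a b = if a ∈ U then σ a else 0 := rfl

lemma wpMsg_succ (U : Set V) (t : ℕ) (a b : V) :
    wpMsg G U σ (t + 1) a b
      = psiZ (∑ u ∈ (G.neighborFinset a).erase b, wpMsg G U σ t u a) := rfl

lemma wpMsg_bound (hσ : ∀ x, σ x = 1 ∨ σ x = -1) (t : ℕ) (a b : V) :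
    -1 ≤ wpMsg G Set.univ σ t a b ∧ wpMsg G Set.univ σ t a b ≤ 1 := by
  cases t with
  | zero =>
    rw [wpMsg_zero, if_pos (Set.mem_univ a)]
    rcases hσ a with h | h <;> rw [h] <;> omega
  | succ t => rw [wpMsg_succ]; exact ⟨neg_one_le_psiZ _, psiZ_le_one _⟩

lemma core_card_bound {dp dm : ℝ} (hdm : 0 < dm) (hdd : dm < dp) (hD : (1000000 : ℝ) ≤ dp)
    (hgap : 1 * Real.sqrt (dp * Real.log dp) ≤ dp - dm)
    (hσ : ∀ x, σ x = 1 ∨ σ x = -1)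
    {u : V} (hu : u ∈ coreSet G σ dp dm 1) :
    (G.neighborFinset u).card + 204 ≤
      2 * ((G.neighborFinset u).filter
        (fun x => σ u * σ x = 1 ∧ x ∈ coreSet G σ dp dm 1)).card := by
  classical
  obtain ⟨U0, hU0, humem⟩ := Set.mem_sUnion.mp hu
  have hsub : U0 ⊆ coreSet G σ dp dm 1 := fun y hy => Set.mem_sUnion.mpr ⟨U0, hU0, hy⟩
  obtain ⟨hplus, hminus, hout⟩ := hU0 u humem
  set N := G.neighborFinset u with hN
  set A := N.filter (fun x => σ u * σ x = 1) with hA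
  set B := N.filter (fun x => σ u * σ x = -1) with hB
  set AK := N.filter (fun x => σ u * σ x = 1 ∧ x ∈ coreSet G σ dp dm 1) with hAK
  set NO := N.filter (fun x => x ∉ U0) with hNO
  -- identify the ncard sets with finset cards
  have hsetA : {w | G.Adj u w ∧ σ u * σ w = 1} = ↑A := by
    ext x; simp [hA, hN, SimpleGraph.mem_neighborFinset]
  have hsetB : {w | G.Adj u w ∧ σ u * σ w = -1} = ↑B := by
    ext x; simp [hB, hN, SimpleGraph.mem_neighborFinset]
  have hsetO : {w | G.Adj u w} \ U0 = ↑NO := by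
    ext x
    simp only [hNO, hN, Set.mem_diff, Set.mem_setOf_eq, Finset.coe_filter,
      SimpleGraph.mem_neighborFinset]
  rw [hsetA, Set.ncard_coe_finset] at hplus
  rw [hsetB, Set.ncard_coe_finset] at hminus
  rw [hsetO, Set.ncard_coe_finset] at hout
  -- partition
  have hAB : A.card + B.card = N.card := by
    have hBeq : B = N.filter (fun x => ¬ (σ u * σ x = 1)) := by
      apply Finset.filter_congr
      intro x hx
      rcases hσ u with h1 | h1 <;> rcases hσ x with h2 | h2 <;>
        simp [h1, h2]
    rw [hA, hBeq]
    exact Finset.card_filter_add_card_filter_not _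
  -- A is nearly contained in AK
  have hAsub : A.card ≤ AK.card + 100 := by
    have : A ⊆ AK ∪ NO := by
      intro x hx
      rw [Finset.mem_union]
      obtain ⟨hxN, hx1⟩ := Finset.mem_filter.mp hx
      by_cases hxU : x ∈ U0
      · exact Or.inl (Finset.mem_filter.mpr ⟨hxN, hx1, hsub hxU⟩)
      · exact Or.inr (Finset.mem_filter.mpr ⟨hxN, hxU⟩)
    calc A.card ≤ (AK ∪ NO).card := Finset.card_le_card this
    _ ≤ AK.card + NO.card := Finset.card_union_le _ _
    _ ≤ AK.card + 100 := by omega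
  -- numeric part
  have hdp0 : (0 : ℝ) < dp := lt_of_lt_of_le (by norm_num) hD
  have hlog : (1 : ℝ) ≤ Real.log dp := by
    rw [Real.le_log_iff_exp_le hdp0]
    calc Real.exp 1 ≤ 2.7182818286 := Real.exp_one_lt_d9.le
    _ ≤ dp := by linarith
  set s := Real.sqrt (dp * Real.log dp) with hs
  have hs1000 : (1000 : ℝ) ≤ s := by
    rw [hs]
    rw [Real.le_sqrt (by norm_num) (by positivity)]
    calc (1000 : ℝ) ^ 2 = 1000000 * 1 := by norm_num
    _ ≤ dp * Real.log dp := by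
        apply mul_le_mul hD hlog (by norm_num) (le_of_lt hdp0)
  have habs1 := abs_le.mp hplus
  have habs2 := abs_le.mp hminus
  have hAB404 : (404 : ℝ) ≤ (A.card : ℝ) - (B.card : ℝ) := by
    have h14 : (1 : ℝ) / 4 * s = s / 4 := by ring
    nlinarith [habs1.1, habs2.2, hgap, hs1000]
  have hZ : (404 : ℤ) ≤ (A.card : ℤ) - (B.card : ℤ) := by exact_mod_cast hAB404
  omega

lemma core_sum_ge {dp dm : ℝ} (hdm : 0 < dm) (hdd : dm < dp) (hD : (1000000 : ℝ) ≤ dp)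
    (hgap : 1 * Real.sqrt (dp * Real.log dp) ≤ dp - dm)
    (hσ : ∀ x, σ x = 1 ∨ σ x = -1)
    {u : V} (hu : u ∈ coreSet G σ dp dm 1)
    (f : V → ℤ) (hb : ∀ x, -1 ≤ f x ∧ f x ≤ 1)
    (hcore : ∀ x, x ∈ coreSet G σ dp dm 1 → f x = σ x)
    (F : Finset V) (hFsub : F ⊆ G.neighborFinset u)
    (hFbig : (G.neighborFinset u).card ≤ F.card + 1) :
    1 ≤ σ u * ∑ x ∈ F, f x := by
  classical
  have hcard := core_card_bound hdm hdd hD hgap hσ hu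
  set N := G.neighborFinset u with hN
  set AK := N.filter (fun x => σ u * σ x = 1 ∧ x ∈ coreSet G σ dp dm 1) with hAK
  set P := F.filter (fun x => x ∈ AK) with hP
  set Q := F.filter (fun x => x ∉ AK) with hQ
  have hPQ : P.card + Q.card = F.card := Finset.card_filter_add_card_filter_not _
  have hPAK : AK.card ≤ P.card + 1 := by
    have e1 : AK.filter (fun x => x ∈ F) ∪ AK.filter (fun x => x ∉ F) = AK := by
      rw [Finset.filter_union_filter_not_eq]
    have e2 : (AK.filter (fun x => x ∈ F)).card = P.card := by
      rw [hP, Finset.filter_mem_eq_inter, Finset.filter_mem_eq_inter, Finset.inter_comm]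
    have e3 : AK.filter (fun x => x ∉ F) ⊆ N \ F := by
      intro x hx
      obtain ⟨hx1, hx2⟩ := Finset.mem_filter.mp hx
      exact Finset.mem_sdiff.mpr ⟨Finset.filter_subset _ _ hx1, hx2⟩
    have e4 : (N \ F).card = N.card - F.card := Finset.card_sdiff_of_subset hFsub
    have e5 : (AK.filter (fun x => x ∉ F)).card ≤ N.card - F.card :=
      e4 ▸ Finset.card_le_card e3
    have e6 : (AK.filter (fun x => x ∈ F)).card + (AK.filter (fun x => x ∉ F)).card
        = AK.card := Finset.card_filter_add_card_filter_not _
    have e7 : F.card ≤ N.card := Finset.card_le_card hFsub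
    omega
  have hstep : ∑ x ∈ F, σ u * f x = ∑ x ∈ P, σ u * f x + ∑ x ∈ Q, σ u * f x :=
    (Finset.sum_filter_add_sum_filter_not F (fun x => x ∈ AK) (fun x => σ u * f x)).symm
  have h1 : ∑ x ∈ P, σ u * f x = (P.card : ℤ) := by
    have hterm : ∀ x ∈ P, σ u * f x = 1 := by
      intro x hx
      obtain ⟨-, hx2⟩ := Finset.mem_filter.mp hx
      obtain ⟨-, hprod, hxK⟩ := Finset.mem_filter.mp hx2
      rw [hcore x hxK]
      exact hprod
    calc ∑ x ∈ P, σ u * f x = ∑ _x ∈ P, (1 : ℤ) := Finset.sum_congr rfl hterm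
    _ = (P.card : ℤ) := by simp
  have h2 : -(Q.card : ℤ) ≤ ∑ x ∈ Q, σ u * f x := by
    have := Finset.card_nsmul_le_sum Q (fun x => σ u * f x) (-1) (fun x _ => by
      show (-1 : ℤ) ≤ σ u * f x
      obtain ⟨hb1, hb2⟩ := hb x
      rcases hσ u with h | h <;> rw [h] <;> omega)
    simpa using this
  rw [Finset.mul_sum, hstep, h1]
  have hFN : F.card ≤ N.card := Finset.card_le_card hFsub
  omega

lemma core_msg {dp dm : ℝ} (hdm : 0 < dm) (hdd : dm < dp) (hD : (1000000 : ℝ) ≤ dp)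
    (hgap : 1 * Real.sqrt (dp * Real.log dp) ≤ dp - dm)
    (hσ : ∀ x, σ x = 1 ∨ σ x = -1) :
    ∀ (t : ℕ) (u w : V), u ∈ coreSet G σ dp dm 1 → wpMsg G Set.univ σ t u w = σ u := by
  intro t
  induction t with
  | zero => intro u w hu; rw [wpMsg_zero, if_pos (Set.mem_univ u)]
  | succ t ih =>
    intro u w hu
    rw [wpMsg_succ]
    have hsum := core_sum_ge hdm hdd hD hgap hσ hu
      (fun x => wpMsg G Set.univ σ t x u) (fun x => wpMsg_bound hσ t x u)
      (fun x hx => ih x u hx) ((G.neighborFinset u).erase w)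
      (Finset.erase_subset _ _) (by
        by_cases hw : w ∈ G.neighborFinset u
        · rw [Finset.card_erase_of_mem hw]; omega
        · rw [Finset.erase_eq_of_notMem hw]; omega)
    beta_reduce at hsum
    rcases hσ u with h | h
    · rw [h]; rw [h, one_mul] at hsum; exact psiZ_eq_one hsum
    · rw [h]; rw [h, neg_one_mul] at hsum; exact psiZ_eq_neg_one (by omega)

lemma core_val_ne {dp dm : ℝ} (hdm : 0 < dm) (hdd : dm < dp) (hD : (1000000 : ℝ) ≤ dp)
    (hgap : 1 * Real.sqrt (dp * Real.log dp) ≤ dp - dm)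
    (hσ : ∀ x, σ x = 1 ∨ σ x = -1)
    {u : V} (hu : u ∈ coreSet G σ dp dm 1) (t : ℕ) :
    wpVal G Set.univ σ t u ≠ 0 := by
  classical
  have hsum := core_sum_ge hdm hdd hD hgap hσ hu
    (fun x => wpMsg G Set.univ σ t x u) (fun x => wpMsg_bound hσ t x u)
    (fun x hx => core_msg hdm hdd hD hgap hσ t x u hx) (G.neighborFinset u)
    (le_refl _) (by omega)
  beta_reduce at hsum
  intro h0
  rw [wpVal] at h0
  rw [h0, mul_zero] at hsum
  omega

end Part6


section Part7

open SimpleGraph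

lemma gval_diff {V : Type*} (KS : Set V) (σ : V → ℤ) (Hx : V → SimpleGraph V)
    (Cx : V → Set V) (x : V) (hσx : σ x = 1 ∨ σ x = -1) :
    (gval KS σ Hx Cx x (-1) : ℤ) - (gval KS σ Hx Cx x 1 : ℤ)
      = if x ∈ KS then σ x
        else psiZ ((cWv KS σ Hx Cx x (-1) : ℤ) - (cWv KS σ Hx Cx x 1 : ℤ)) := by
  classical
  by_cases hK : x ∈ KS
  · simp only [gval, if_pos hK]
    rcases hσx with h | h <;> rw [h] <;> norm_num [ez] <;> push_cast <;> ring
  · simp only [gval, if_neg hK]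
    have h1 : ez (-1) 1 = 1 := by norm_num [ez]
    have h2 : ez (-1) (-1) = 0 := by norm_num [ez]
    have h3 : ez 1 1 = 0 := by norm_num [ez]
    have h4 : ez 1 (-1) = 1 := by norm_num [ez]
    rw [h1, h2, h3, h4]
    unfold psiZ
    push_cast
    omega

variable {V : Type*} {G : SimpleGraph V} [∀ w : V, Fintype (G.neighborSet w)]
  {σ : V → ℤ} {K : Set V} {v : V}

lemma main_ind (htree : (G.induce (CvSet G K v)).IsTree) (hfin : (CvSet G K v).Finite)
    (hσ : ∀ x, σ x = 1 ∨ σ x = -1)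
    (hK : ∀ (t : ℕ) (u w : V), u ∈ K → wpMsg G Set.univ σ t u w = σ u) :
    ∀ (n : ℕ) (w : V), w ∈ CvSet G K v → w ≠ v → w ∉ K → hdir G K v w ≤ n →
      (∀ z : ℤ, z = 1 ∨ z = -1 →
        cutW (Gdir G K v w) (Cdir G K v w ∩ ({w} ∪ K)) (fun a => if a = w then z else σ a)
          = ∑ x ∈ (G.neighborFinset w).erase (parentOf G K v w),
              gval K σ (Gdir G K v) (Cdir G K v) x z) ∧
      (∀ t : ℕ, hdir G K v w + 1 ≤ t →
        wpMsg G Set.univ σ t w (parentOf G K v w) =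
          psiZ ((cutW (Gdir G K v w) (Cdir G K v w ∩ ({w} ∪ K))
              (fun a => if a = w then -1 else σ a) : ℤ)
            - (cutW (Gdir G K v w) (Cdir G K v w ∩ ({w} ∪ K))
              (fun a => if a = w then 1 else σ a) : ℤ))) := by
  classical
  intro n
  induction n using Nat.strong_induction_on with
  | _ n IH =>
    intro w hw hwv hwK hn
    set pw := parentOf G K v w with hpw
    set X := (G.neighborFinset w).erase pw with hX
    have hchild : ∀ x ∈ X, (GvG G K v).Adj w x ∧ x ≠ pw := by
      intro x hx
      obtain ⟨hxp, hxN⟩ := Finset.mem_erase.mp hx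
      have hxadj : G.Adj w x := (SimpleGraph.mem_neighborFinset G w x).mp hxN
      exact ⟨⟨hxadj, hw, CvSet_closed hw hwK hxadj⟩, hxp⟩
    have hXiff : ∀ b, b ∈ X ↔ ((GvG G K v).Adj w b ∧ b ≠ pw) := by
      intro b
      refine ⟨fun h => hchild b h, fun ⟨h1, h2⟩ => Finset.mem_erase.mpr
        ⟨h2, (SimpleGraph.mem_neighborFinset G w b).mpr h1.1⟩⟩
    have hchildS : ∀ x ∈ X, parentOf G K v x = w ∧ x ≠ v ∧ x ∈ CvSet G K v := by
      intro x hx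
      exact child_facts htree hw hwv (hchild x hx).1 (hchild x hx).2
    have hcut : ∀ z : ℤ, z = 1 ∨ z = -1 →
        cutW (Gdir G K v w) (Cdir G K v w ∩ ({w} ∪ K)) (fun a => if a = w then z else σ a)
          = ∑ x ∈ X, gval K σ (Gdir G K v) (Cdir G K v) x z := by
      intro z hz
      refine cut_hub hfin.toFinset (Gdir G K v w) K σ hσ w (hfin.mem_toFinset.mpr hw) X
        (fun x hx => hfin.mem_toFinset.mpr (hchildS x hx).2.2)
        (fun hcon => ((hchild w hcon).1).ne rfl)
        (Gdir G K v) (Cdir G K v)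
        (fun x _ => mem_Cdir_self G K v x)
        (fun x hx => hub_not_mem_child htree hw hwv (hchild x hx).1 (hchild x hx).2)
        (fun x hx a ha => hfin.mem_toFinset.mpr (Cdir_subset_S (hchildS x hx).2.2 ha))
        (fun x hx x' hx' hne a ha ha' => Cdir_disjoint htree (hchildS x hx).2.2
          (hchildS x hx).2.1 (hchildS x' hx').2.2 (hchildS x' hx').2.1
          (by rw [(hchildS x hx).1, (hchildS x' hx').1]) hne ha ha')
        ?_ (fun x hx a b h => ⟨h.2.1, h.2.2⟩) (Cdir G K v w) ?_ z hz
      · intro a b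
        rw [Gdir_hub_adj htree hw hwv]
        constructor
        · rintro (⟨h1, h2⟩ | ⟨h1, h2⟩ | ⟨x, hx, h3⟩)
          · exact Or.inl ⟨h1, (hXiff b).mpr h2⟩
          · exact Or.inr (Or.inl ⟨h1, (hXiff a).mpr h2⟩)
          · exact Or.inr (Or.inr ⟨x, (hXiff x).mpr hx, h3⟩)
        · rintro (⟨h1, h2⟩ | ⟨h1, h2⟩ | ⟨x, hx, h3⟩)
          · exact Or.inl ⟨h1, (hXiff b).mp h2⟩
          · exact Or.inr (Or.inl ⟨h1, (hXiff a).mp h2⟩)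
          · exact Or.inr (Or.inr ⟨x, (hXiff x).mp hx, h3⟩)
      · intro a
        constructor
        · intro ha
          by_cases haw : a = w
          · exact Or.inl haw
          · obtain ⟨x, h1, h2, h3⟩ := Cdir_decomp htree hw hwv ha haw
            exact Or.inr ⟨x, (hXiff x).mpr ⟨h1, h2⟩, h3⟩
        · rintro (rfl | ⟨x, hx, ha⟩)
          · exact mem_Cdir_self G K v a
          · exact Cdir_child_subset htree hw hwv (hchild x hx).1 (hchild x hx).2 ha
    refine ⟨hcut, ?_⟩
    intro t ht
    have hmsg : ∀ x ∈ X, wpMsg G Set.univ σ (t - 1) x w =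
        (if x ∈ K then σ x
          else psiZ ((cWv K σ (Gdir G K v) (Cdir G K v) x (-1) : ℤ)
            - (cWv K σ (Gdir G K v) (Cdir G K v) x 1 : ℤ))) := by
      intro x hx
      by_cases hxK : x ∈ K
      · rw [if_pos hxK]
        exact hK _ x w hxK
      · rw [if_neg hxK]
        obtain ⟨hpx, hxv, hxS⟩ := hchildS x hx
        have hcge := hdir_child_ge htree hfin hw hwv (hchild x hx).1 (hchild x hx).2
        have hlt : hdir G K v x < n := by omega
        have := (IH (hdir G K v x) hlt x hxS hxv hxK (le_refl _)).2 (t - 1) (by omega)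
        rw [hpx] at this
        exact this
    rw [hcut (-1) (Or.inr rfl), hcut 1 (Or.inl rfl)]
    have hdiff : ((∑ x ∈ X, gval K σ (Gdir G K v) (Cdir G K v) x (-1) : ℕ) : ℤ)
        - ((∑ x ∈ X, gval K σ (Gdir G K v) (Cdir G K v) x 1 : ℕ) : ℤ)
        = ∑ x ∈ X, (if x ∈ K then σ x
            else psiZ ((cWv K σ (Gdir G K v) (Cdir G K v) x (-1) : ℤ)
              - (cWv K σ (Gdir G K v) (Cdir G K v) x 1 : ℤ))) := by
      push_cast
      rw [← Finset.sum_sub_distrib]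
      exact Finset.sum_congr rfl (fun x _ => gval_diff K σ _ _ x (hσ x))
    rw [hdiff]
    obtain ⟨t', rfl⟩ : ∃ t', t = t' + 1 := ⟨t - 1, by omega⟩
    rw [wpMsg_succ]
    congr 1
    refine Finset.sum_congr rfl ?_
    intro x hx
    have := hmsg x hx
    simpa using this

lemma root_cut (htree : (G.induce (CvSet G K v)).IsTree) (hfin : (CvSet G K v).Finite)
    (hσ : ∀ x, σ x = 1 ∨ σ x = -1) (z : ℤ) (hz : z = 1 ∨ z = -1) :
    cutW (GvG G K v) (CvSet G K v ∩ ({v} ∪ K)) (fun a => if a = v then z else σ a)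
      = ∑ x ∈ G.neighborFinset v, gval K σ (Gdir G K v) (Cdir G K v) x z := by
  classical
  set X := G.neighborFinset v with hX
  have hXiff : ∀ b, b ∈ X ↔ (GvG G K v).Adj v b := by
    intro b
    rw [hX, SimpleGraph.mem_neighborFinset]
    exact ⟨fun h => ⟨h, mem_CvSet_self G K v, adj_mem_CvSet h⟩, fun h => h.1⟩
  have hchildS : ∀ x ∈ X, parentOf G K v x = v ∧ x ≠ v ∧ x ∈ CvSet G K v := by
    intro x hx
    have h := root_child htree ((hXiff x).mp hx)
    exact ⟨h.1, h.2, ((hXiff x).mp hx).2.2⟩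
  refine cut_hub hfin.toFinset (GvG G K v) K σ hσ v
    (hfin.mem_toFinset.mpr (mem_CvSet_self G K v)) X
    (fun x hx => hfin.mem_toFinset.mpr (hchildS x hx).2.2)
    (fun hcon => ((hXiff v).mp hcon).ne rfl)
    (Gdir G K v) (Cdir G K v)
    (fun x _ => mem_Cdir_self G K v x)
    (fun x hx => root_not_mem_child htree ((hXiff x).mp hx))
    (fun x hx a ha => hfin.mem_toFinset.mpr (Cdir_subset_S (hchildS x hx).2.2 ha))
    (fun x hx x' hx' hne a ha ha' => Cdir_disjoint htree (hchildS x hx).2.2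
      (hchildS x hx).2.1 (hchildS x' hx').2.2 (hchildS x' hx').2.1
      (by rw [(hchildS x hx).1, (hchildS x' hx').1]) hne ha ha')
    ?_ (fun x hx a b h => ⟨h.2.1, h.2.2⟩) (CvSet G K v) ?_ z hz
  · intro a b
    rw [GvG_hub_adj htree]
    constructor
    · rintro (⟨h1, h2, -⟩ | ⟨h1, h2, -⟩ | ⟨x, ⟨hx, -⟩, h3⟩)
      · exact Or.inl ⟨h1, (hXiff b).mpr h2⟩
      · exact Or.inr (Or.inl ⟨h1, (hXiff a).mpr h2⟩)
      · exact Or.inr (Or.inr ⟨x, (hXiff x).mpr hx, h3⟩)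
    · rintro (⟨h1, h2⟩ | ⟨h1, h2⟩ | ⟨x, hx, h3⟩)
      · exact Or.inl ⟨h1, (hXiff b).mp h2, trivial⟩
      · exact Or.inr (Or.inl ⟨h1, (hXiff a).mp h2, trivial⟩)
      · exact Or.inr (Or.inr ⟨x, ⟨(hXiff x).mp hx, trivial⟩, h3⟩)
  · intro a
    constructor
    · intro ha
      by_cases hav : a = v
      · exact Or.inl hav
      · obtain ⟨x, h1, h3⟩ := Cdir_decomp_root htree ha hav
        exact Or.inr ⟨x, (hXiff x).mpr h1, h3⟩
    · rintro (hav | ⟨x, hx, ha⟩)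
      · exact hav ▸ mem_CvSet_self G K v
      · exact Cdir_subset_S (hchildS x hx).2.2 ha

end Part7


/-- Lemma 3.3 (2): if `μ*_{u→v} = 0` then
`cut(G_{u→v}, σ^{+1}_{u→v}) = cut(G_{u→v}, σ^{-1}_{u→v})`, and if `μ*_v = 0` then
`cut(G_v, σ^{+1}_v) = cut(G_v, σ^{-1}_v)`. -/
theorem cut_indifference :
    ∃ c : ℝ, 0 < c ∧ ∃ D : ℝ, ∀ dp dm : ℝ,
    0 < dm → dm < dp → D ≤ dp → c * Real.sqrt (dp * Real.log dp) ≤ dp - dm →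
    ∀ (V : Type*) (G : SimpleGraph V) [∀ v : V, Fintype (G.neighborSet v)] (σ : V → ℤ),
    (∀ x : V, σ x = 1 ∨ σ x = -1) →
    ∀ K : Set V, K = coreSet G σ dp dm c →
    ∀ v : V, (CvSet G K v).Finite → (G.induce (CvSet G K v)).IsTree →
    (∀ u ∈ CvSet G K v, u ≠ v → 1 ≤ hdir G K v u → muStarDir G K σ v u = 0 →
        cutW (Gdir G K v u) (Cdir G K v u ∩ ({u} ∪ K)) (fun x => if x = u then 1 else σ x)
          = cutW (Gdir G K v u) (Cdir G K v u ∩ ({u} ∪ K))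
              (fun x => if x = u then -1 else σ x)) ∧
    (muStarV G K σ v = 0 →
        cutW (GvG G K v) (CvSet G K v ∩ ({v} ∪ K)) (fun x => if x = v then 1 else σ x)
          = cutW (GvG G K v) (CvSet G K v ∩ ({v} ∪ K))
              (fun x => if x = v then -1 else σ x)) := by
  classical
  refine ⟨1, one_pos, 1000000, ?_⟩
  intro dp dm hdm hdd hD hgap V G _ σ hσ K hKeq v hfin htree
  have hK : ∀ (t : ℕ) (u w : V), u ∈ K → wpMsg G Set.univ σ t u w = σ u := by
    intro t u w hu
    rw [hKeq] at hu
    exact core_msg hdm hdd hD hgap hσ t u w hu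
  constructor
  · intro u huS huv h1 hmu0
    by_cases huK : u ∈ K
    · exfalso
      have hmm := hK (hdir G K v u + 1) u (parentOf G K v u) huK
      simp only [muStarDir] at hmu0
      rw [hmm] at hmu0
      rcases hσ u with h | h <;> rw [h] at hmu0 <;> exact absurd hmu0 (by norm_num)
    · obtain ⟨hcut, hmsgC⟩ := main_ind htree hfin hσ hK (hdir G K v u) u huS huv huK
        (le_refl _)
      have hstable := hmsgC (hdir G K v u + 1) (le_refl _)
      simp only [muStarDir] at hmu0
      rw [hstable] at hmu0
      have h0 := psiZ_eq_zero.mp hmu0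
      have heq : ((cutW (Gdir G K v u) (Cdir G K v u ∩ ({u} ∪ K))
          (fun a => if a = u then 1 else σ a) : ℕ) : ℤ)
          = ((cutW (Gdir G K v u) (Cdir G K v u ∩ ({u} ∪ K))
          (fun a => if a = u then -1 else σ a) : ℕ) : ℤ) := by omega
      exact_mod_cast heq
  · intro hmu0
    by_cases hvK : v ∈ K
    · exfalso
      simp only [muStarV] at hmu0
      rw [hKeq] at hvK
      exact core_val_ne hdm hdd hD hgap hσ hvK _ hmu0
    · have hc1 := root_cut (K := K) (v := v) htree hfin hσ 1 (Or.inl rfl)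
      have hcm := root_cut (K := K) (v := v) htree hfin hσ (-1) (Or.inr rfl)
      simp only [muStarV, wpVal] at hmu0
      have hmsg : ∀ x ∈ G.neighborFinset v, wpMsg G Set.univ σ (hvG G K v + 1) x v
          = (if x ∈ K then σ x
            else psiZ ((cWv K σ (Gdir G K v) (Cdir G K v) x (-1) : ℤ)
              - (cWv K σ (Gdir G K v) (Cdir G K v) x 1 : ℤ))) := by
        intro x hx
        by_cases hxK : x ∈ K
        · rw [if_pos hxK]
          exact hK _ x v hxK
        · rw [if_neg hxK]
          have hadjG : G.Adj v x := (SimpleGraph.mem_neighborFinset G v x).mp hx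
          have hadj : (GvG G K v).Adj v x :=
            ⟨hadjG, mem_CvSet_self G K v, adj_mem_CvSet hadjG⟩
          obtain ⟨hpx, hxv⟩ := root_child htree hadj
          have hge := hdir_root_ge htree hfin hadj
          have hstx := (main_ind htree hfin hσ hK (hdir G K v x) x hadj.2.2 hxv hxK
            (le_refl _)).2 (hvG G K v + 1) (by omega)
          rw [hpx] at hstx
          exact hstx
      rw [Finset.sum_congr rfl hmsg] at hmu0
      have hdiff : ((∑ x ∈ G.neighborFinset v,
            gval K σ (Gdir G K v) (Cdir G K v) x (-1) : ℕ) : ℤ)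
          - ((∑ x ∈ G.neighborFinset v,
            gval K σ (Gdir G K v) (Cdir G K v) x 1 : ℕ) : ℤ)
          = ∑ x ∈ G.neighborFinset v, (if x ∈ K then σ x
              else psiZ ((cWv K σ (Gdir G K v) (Cdir G K v) x (-1) : ℤ)
                - (cWv K σ (Gdir G K v) (Cdir G K v) x 1 : ℤ))) := by
        push_cast
        rw [← Finset.sum_sub_distrib]
        exact Finset.sum_congr rfl (fun x _ => gval_diff K σ _ _ x (hσ x))
      rw [hmu0] at hdiff
      rw [hc1, hcm]
      omega
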